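/- arXiv:1702.05127 — 7 statements merged into one kernel-verified Lean document; each statement's English description precedes it below -/
import Mathlib

section
/- Let n ≥ 3, let u ∈ U_n be an ultrametric, and let i, j, k be three distinct elements of {1,…,n} with u_ij < u_ik = u_jk. Let ε be a real number with 0 < ε < u_ik − u_ij, and define the dissimilarity map δ by δ_ik = u_ik + ε, δ_jk = u_jk − ε, and δ_pq = u_pq for all other pairs. Then d(δ, U_n) = ε and u ∈ C(δ, U_n), i.e., u is an l∞-closest ultrametric to δ. -/
/-- Index set for unordered pairs of distinct elements of `{1,…,n}`: ordered pairs
`(i, j)` with `i < j`. -/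
abbrev PairIdx (n : ℕ) := {p : Fin n × Fin n // p.1 < p.2}

/-- A dissimilarity map on `n` elements: a point of `ℝ^(n choose 2)`, viewed as a
real-valued function on unordered pairs of distinct elements.  The product metric on this
type is exactly the `l∞`-metric. -/
abbrev DissimMap (n : ℕ) := PairIdx n → ℝ

/-- The value of a dissimilarity map on the unordered pair `{i, j}` (zero if `i = j`). -/
def dm {n : ℕ} (u : DissimMap n) (i j : Fin n) : ℝ :=
  if h : i < j then u ⟨(i, j), h⟩ else if h' : j < i then u ⟨(j, i), h'⟩ else 0

/-- The set of ultrametrics on `n` elements. -/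
def Ultrametrics (n : ℕ) : Set (DissimMap n) :=
  {u | ∀ i j k : Fin n, i ≠ j → i ≠ k → j ≠ k → dm u i j ≤ max (dm u i k) (dm u j k)}

/-- The set of points of `S` that are `l∞`-closest to `x`. -/
noncomputable def closestPts {n : ℕ} (x : DissimMap n) (S : Set (DissimMap n)) :
    Set (DissimMap n) :=
  {y ∈ S | dist x y = Metric.infDist x S}

/-- Build a dissimilarity map from a matrix of values. -/
def ofMat {n : ℕ} (A : Matrix (Fin n) (Fin n) ℝ) : DissimMap n := fun p => A p.1.1 p.1.2

lemma finset_pair_eq {α : Type*} [DecidableEq α] {a b c d : α} :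
    ({a, b} : Finset α) = {c, d} ↔ a = c ∧ b = d ∨ a = d ∧ b = c := by
  rw [← Finset.coe_inj]; push_cast; exact Set.pair_eq_pair_iff

lemma dm_comm {n : ℕ} (u : DissimMap n) (a b : Fin n) : dm u a b = dm u b a := by
  unfold dm
  rcases lt_trichotomy a b with h | h | h
  · simp [h, lt_asymm h]
  · simp [h]
  · simp [h, lt_asymm h]

lemma abs_dm_sub_le {n : ℕ} (x y : DissimMap n) {a b : Fin n} (h : a ≠ b) :
    |dm x a b - dm y a b| ≤ dist x y := by
  rcases h.lt_or_gt with h | h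
  · have := dist_le_pi_dist x y ⟨(a, b), h⟩
    simpa [dm, h, Real.dist_eq] using this
  · have := dist_le_pi_dist x y ⟨(b, a), h⟩
    simpa [dm, h, lt_asymm h, Real.dist_eq] using this

lemma dist_dm_le {n : ℕ} (x y : DissimMap n) {r : ℝ} (hr : 0 ≤ r)
    (h : ∀ a b : Fin n, a < b → |dm x a b - dm y a b| ≤ r) : dist x y ≤ r := by
  rw [dist_pi_le_iff hr]
  rintro ⟨⟨a, b⟩, hab⟩
  have := h a b hab
  simpa [dm, hab, Real.dist_eq] using this

/-- perturbing an ultrametric `u` with `u_ij < u_ik = u_jk` by adding `ε` to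
the `{i,k}` coordinate and subtracting `ε` from the `{j,k}` coordinate (for
`0 < ε < u_ik - u_ij`) yields a dissimilarity map `δ` with `d(δ, U_n) = ε` for which `u`
is an `l∞`-closest ultrametric. -/
theorem perturbed_ultrametric_closest (n : ℕ) (hn : 3 ≤ n)
    (u : DissimMap n) (hu : u ∈ Ultrametrics n)
    (i j k : Fin n) (hij : i ≠ j) (hik : i ≠ k) (hjk : j ≠ k)
    (h1 : dm u i j < dm u i k) (h2 : dm u i k = dm u j k)
    (ε : ℝ) (hε0 : 0 < ε) (hε1 : ε < dm u i k - dm u i j)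
    (δ : DissimMap n)
    (hδik : dm δ i k = dm u i k + ε)
    (hδjk : dm δ j k = dm u j k - ε)
    (hδ : ∀ p q : Fin n, p ≠ q → ({p, q} : Finset (Fin n)) ≠ {i, k} →
      ({p, q} : Finset (Fin n)) ≠ {j, k} → dm δ p q = dm u p q) :
    Metric.infDist δ (Ultrametrics n) = ε ∧ u ∈ closestPts δ (Ultrametrics n) := by
  have hδij : dm δ i j = dm u i j := by
    refine hδ i j hij ?_ ?_
    · intro h; rcases finset_pair_eq.mp h with ⟨_, h'⟩ | ⟨h', _⟩ <;> [exact hjk h'; exact hik h']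
    · intro h; rcases finset_pair_eq.mp h with ⟨h', _⟩ | ⟨h', _⟩ <;> [exact hij h'; exact hik h']
  -- lower bound
  have key : ∀ v ∈ Ultrametrics n, ε ≤ dist δ v := by
    intro v hv
    set t := dist δ v with ht
    have hA : |dm δ i k - dm v i k| ≤ t := abs_dm_sub_le δ v hik
    have hB : |dm δ j k - dm v j k| ≤ t := abs_dm_sub_le δ v hjk
    have hC : |dm δ i j - dm v i j| ≤ t := abs_dm_sub_le δ v hij
    rw [abs_le] at hA hB hC
    have hvu : dm v i k ≤ max (dm v i j) (dm v j k) := by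
      have := hv i k j hik hij (Ne.symm hjk)
      rwa [dm_comm v k j] at this
    have e1 : dm u i k + ε - dm v i k ≤ t := by rw [← hδik]; exact hA.2
    have e2 : -t ≤ dm u j k - ε - dm v j k := by rw [← hδjk]; exact hB.1
    have e3 : -t ≤ dm u i j - dm v i j := by rw [← hδij]; exact hC.1
    rcases le_max_iff.mp hvu with h | h
    · linarith
    · linarith
  -- upper bound: dist δ u ≤ ε
  have hle : dist δ u ≤ ε := by
    refine dist_dm_le δ u hε0.le ?_
    intro a b hab
    by_cases hik2 : ({a, b} : Finset (Fin n)) = {i, k}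
    · rcases finset_pair_eq.mp hik2 with ⟨ha, hb⟩ | ⟨ha, hb⟩ <;> rw [ha, hb]
      · rw [hδik]; rw [show dm u i k + ε - dm u i k = ε by ring, abs_of_pos hε0]
      · rw [dm_comm δ k i, dm_comm u k i, hδik,
          show dm u i k + ε - dm u i k = ε by ring, abs_of_pos hε0]
    · by_cases hjk2 : ({a, b} : Finset (Fin n)) = {j, k}
      · rcases finset_pair_eq.mp hjk2 with ⟨ha, hb⟩ | ⟨ha, hb⟩ <;> rw [ha, hb]
        · rw [hδjk]; rw [show dm u j k - ε - dm u j k = -ε by ring, abs_neg, abs_of_pos hε0]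
        · rw [dm_comm δ k j, dm_comm u k j, hδjk,
            show dm u j k - ε - dm u j k = -ε by ring, abs_neg, abs_of_pos hε0]
      · rw [hδ a b (ne_of_lt hab) hik2 hjk2, sub_self, abs_zero]; exact hε0.le
  have hinf_le : Metric.infDist δ (Ultrametrics n) ≤ ε :=
    le_trans (Metric.infDist_le_dist_of_mem hu) hle
  have hinf_ge : ε ≤ Metric.infDist δ (Ultrametrics n) := by
    by_contra h
    push_neg at h
    obtain ⟨y, hy, hd⟩ := (Metric.infDist_lt_iff ⟨u, hu⟩).mp h
    exact absurd (key y hy) (not_le.mpr hd)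
  have hinf : Metric.infDist δ (Ultrametrics n) = ε := le_antisymm hinf_le hinf_ge
  refine ⟨hinf, hu, ?_⟩
  rw [hinf]
  exact le_antisymm hle (key u hu)
end

section
/- Let δ = (5,5,10,5,9,11) ∈ ℝ^6 in coordinates (x_12, x_13, x_14, x_23, x_24, x_34). Then d(δ, U_4) = 1, and the four ultrametrics (6,6,10,6,10,10), (4,6,10,6,10,10), (6,4,10,6,10,10), and (6,6,10,4,10,10) all belong to C(δ, U_4); in particular, the set of l∞-closest ultrametrics to δ contains ultrametrics realizing the unresolved topology and all three binary resolutions of the tritomy. -/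
private def q23 : PairIdx 4 := ⟨(1,2), by decide⟩
private def q24 : PairIdx 4 := ⟨(1,3), by decide⟩
private def q34 : PairIdx 4 := ⟨(2,3), by decide⟩

private lemma dm_lt' {n : ℕ} (u : DissimMap n) {i j : Fin n} (h : i < j) :
    dm u i j = u ⟨(i,j), h⟩ := by rw [dm, dif_pos h]

private lemma dm_gt' {n : ℕ} (u : DissimMap n) {i j : Fin n} (h : j < i) :
    dm u i j = u ⟨(j,i), h⟩ := by rw [dm, dif_neg (not_lt.mpr h.le), dif_pos h]

private lemma lower_bound (u : DissimMap 4) (hu : u ∈ Ultrametrics 4) :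
    1 ≤ dist (ofMat !![0,5,5,10; 5,0,5,9; 5,5,0,11; 10,9,11,0]) u := by
  by_contra h
  push_neg at h
  rw [dist_pi_lt_iff (by norm_num)] at h
  have h23 := h q23
  have h24 := h q24
  have h34 := h q34
  simp [ofMat, q23, q24, q34, Real.dist_eq, abs_lt] at h23 h24 h34
  have key := hu 2 3 1 (by decide) (by decide) (by decide)
  rw [dm_lt' u (show (2:Fin 4) < 3 by decide), dm_gt' u (show (1:Fin 4) < 2 by decide),
    dm_gt' u (show (1:Fin 4) < 3 by decide)] at key
  have e1 : u ⟨((2:Fin 4),(3:Fin 4)), by decide⟩ = u q34 := rfl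
  have e2 : u ⟨((1:Fin 4),(2:Fin 4)), by decide⟩ = u q23 := rfl
  have e3 : u ⟨((1:Fin 4),(3:Fin 4)), by decide⟩ = u q24 := rfl
  rw [e1, e2, e3] at key
  have hm : max (u q23) (u q24) < 10 := max_lt (by linarith) (by linarith)
  linarith [h34.2]

private lemma mem0 : ofMat !![0,6,6,10; 6,0,6,10; 6,6,0,10; 10,10,10,0] ∈ Ultrametrics 4 := by
  intro i j k _ _ _
  fin_cases i <;> fin_cases j <;> fin_cases k <;>
    simp [dm, ofMat, Fin.mk_lt_mk] <;> norm_num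

private lemma mem1 : ofMat !![0,4,6,10; 4,0,6,10; 6,6,0,10; 10,10,10,0] ∈ Ultrametrics 4 := by
  intro i j k _ _ _
  fin_cases i <;> fin_cases j <;> fin_cases k <;>
    simp [dm, ofMat, Fin.mk_lt_mk] <;> norm_num

private lemma mem2 : ofMat !![0,6,4,10; 6,0,6,10; 4,6,0,10; 10,10,10,0] ∈ Ultrametrics 4 := by
  intro i j k _ _ _
  fin_cases i <;> fin_cases j <;> fin_cases k <;>
    simp [dm, ofMat, Fin.mk_lt_mk] <;> norm_num

private lemma mem3 : ofMat !![0,6,6,10; 6,0,4,10; 6,4,0,10; 10,10,10,0] ∈ Ultrametrics 4 := by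
  intro i j k _ _ _
  fin_cases i <;> fin_cases j <;> fin_cases k <;>
    simp [dm, ofMat, Fin.mk_lt_mk] <;> norm_num

private lemma dist_one' (A : Matrix (Fin 4) (Fin 4) ℝ)
    (hA : ofMat A ∈ Ultrametrics 4)
    (hle : ∀ p : PairIdx 4,
      dist (ofMat !![0,5,5,10; 5,0,5,9; 5,5,0,11; 10,9,11,0] p) (ofMat A p) ≤ 1) :
    dist (ofMat !![0,5,5,10; 5,0,5,9; 5,5,0,11; 10,9,11,0]) (ofMat A) = 1 :=
  le_antisymm (by rw [dist_pi_le_iff (by norm_num)]; exact hle) (lower_bound _ hA)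

private lemma infDist_one :
    Metric.infDist (ofMat !![0,5,5,10; 5,0,5,9; 5,5,0,11; 10,9,11,0])
      (Ultrametrics 4) = 1 := by
  have hd := dist_one' _ mem0 (by
    rintro ⟨⟨i,j⟩,hij⟩
    fin_cases i <;> fin_cases j <;> simp_all [ofMat, Real.dist_eq] <;> norm_num)
  apply le_antisymm
  · calc Metric.infDist _ (Ultrametrics 4) ≤ _ := Metric.infDist_le_dist_of_mem mem0
      _ = 1 := hd
  · rw [Metric.infDist_eq_iInf]
    have : Nonempty (Ultrametrics 4) := ⟨⟨_, mem0⟩⟩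
    exact le_ciInf fun y => lower_bound y y.2

private lemma dd0 : ∀ p : PairIdx 4, dist (ofMat !![0,5,5,10; 5,0,5,9; 5,5,0,11; 10,9,11,0] p)
    (ofMat !![0,6,6,10; 6,0,6,10; 6,6,0,10; 10,10,10,0] p) ≤ 1 := by
  rintro ⟨⟨i,j⟩,hij⟩
  fin_cases i <;> fin_cases j <;> simp_all [ofMat, Real.dist_eq] <;> norm_num

private lemma dd1 : ∀ p : PairIdx 4, dist (ofMat !![0,5,5,10; 5,0,5,9; 5,5,0,11; 10,9,11,0] p)
    (ofMat !![0,4,6,10; 4,0,6,10; 6,6,0,10; 10,10,10,0] p) ≤ 1 := by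
  rintro ⟨⟨i,j⟩,hij⟩
  fin_cases i <;> fin_cases j <;> simp_all [ofMat, Real.dist_eq] <;> norm_num

private lemma dd2 : ∀ p : PairIdx 4, dist (ofMat !![0,5,5,10; 5,0,5,9; 5,5,0,11; 10,9,11,0] p)
    (ofMat !![0,6,4,10; 6,0,6,10; 4,6,0,10; 10,10,10,0] p) ≤ 1 := by
  rintro ⟨⟨i,j⟩,hij⟩
  fin_cases i <;> fin_cases j <;> simp_all [ofMat, Real.dist_eq] <;> norm_num

private lemma dd3 : ∀ p : PairIdx 4, dist (ofMat !![0,5,5,10; 5,0,5,9; 5,5,0,11; 10,9,11,0] p)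
    (ofMat !![0,6,6,10; 6,0,4,10; 6,4,0,10; 10,10,10,0] p) ≤ 1 := by
  rintro ⟨⟨i,j⟩,hij⟩
  fin_cases i <;> fin_cases j <;> simp_all [ofMat, Real.dist_eq] <;> norm_num

/-- for `δ = (5,5,10,5,9,11)` (coordinates `(x₁₂,x₁₃,x₁₄,x₂₃,x₂₄,x₃₄)`),
`d(δ, U₄) = 1` and the four ultrametrics `(6,6,10,6,10,10)`, `(4,6,10,6,10,10)`,
`(6,4,10,6,10,10)`, `(6,6,10,4,10,10)` — realizing the unresolved tritomy and its three
binary resolutions — are all `l∞`-closest ultrametrics to `δ`. -/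
theorem closest_ultrametrics_all_resolutions :
    Metric.infDist (ofMat !![0,5,5,10; 5,0,5,9; 5,5,0,11; 10,9,11,0])
      (Ultrametrics 4) = 1 ∧
    ofMat !![0,6,6,10; 6,0,6,10; 6,6,0,10; 10,10,10,0] ∈
      closestPts (ofMat !![0,5,5,10; 5,0,5,9; 5,5,0,11; 10,9,11,0]) (Ultrametrics 4) ∧
    ofMat !![0,4,6,10; 4,0,6,10; 6,6,0,10; 10,10,10,0] ∈
      closestPts (ofMat !![0,5,5,10; 5,0,5,9; 5,5,0,11; 10,9,11,0]) (Ultrametrics 4) ∧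
    ofMat !![0,6,4,10; 6,0,6,10; 4,6,0,10; 10,10,10,0] ∈
      closestPts (ofMat !![0,5,5,10; 5,0,5,9; 5,5,0,11; 10,9,11,0]) (Ultrametrics 4) ∧
    ofMat !![0,6,6,10; 6,0,4,10; 6,4,0,10; 10,10,10,0] ∈
      closestPts (ofMat !![0,5,5,10; 5,0,5,9; 5,5,0,11; 10,9,11,0]) (Ultrametrics 4) := by
  refine ⟨infDist_one, ⟨mem0, ?_⟩, ⟨mem1, ?_⟩, ⟨mem2, ?_⟩, ⟨mem3, ?_⟩⟩ <;> rw [infDist_one]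
  · exact dist_one' _ mem0 dd0
  · exact dist_one' _ mem1 dd1
  · exact dist_one' _ mem2 dd2
  · exact dist_one' _ mem3 dd3
end

section
/- For every n ≥ 3 there exists δ ∈ ℝ^(n choose 2) such that the set C(δ, U_n) of l∞-closest ultrametrics to δ is convex and its affine hull has dimension n − 2. -/
namespace CUD
variable {n : ℕ}

/-- the perturbed dissimilarity map -/
noncomputable def del (n : ℕ) : DissimMap n := fun p =>
  2 * (p.1.2.val : ℝ) + (if p.1.1.val = 0 ∧ p.1.2.val = n - 1 then 1 else 0)

/-- central closest ultrametric -/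
noncomputable def ust (n : ℕ) : DissimMap n := fun p =>
  if p.1.2.val = n - 1 then 2 * ((n - 1 : ℕ) : ℝ) + 1 / 2 else 2 * (p.1.2.val : ℝ)

lemma pair_pos (p : PairIdx n) : 0 < p.1.2.val :=
  Nat.lt_of_le_of_lt (Nat.zero_le _) p.2

/-- the pair (0, p.2) -/
def pair0 (p : PairIdx n) : PairIdx n :=
  ⟨(⟨0, p.1.2.pos⟩, p.1.2), Fin.mk_lt_of_lt_val (pair_pos p)⟩

lemma pair0_snd (p : PairIdx n) : (pair0 p).1.2 = p.1.2 := rfl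

/-- the candidate closest set -/
def SS (n : ℕ) : Set (DissimMap n) :=
  {u | ∀ p : PairIdx n,
    (p.1.2.val = n - 1 → u p = 2 * ((n - 1 : ℕ) : ℝ) + 1 / 2) ∧
    (p.1.2.val ≠ n - 1 →
      u p = u (pair0 p) ∧
      u p ∈ Set.Icc (2 * (p.1.2.val : ℝ) - 1 / 2) (2 * (p.1.2.val : ℝ) + 1 / 2))}

lemma ust_mem_SS : ust n ∈ SS n := by
  intro p
  refine ⟨fun hp => by simp [ust, hp], fun hp => ⟨rfl, ?_⟩⟩
  simp only [ust, hp, if_false, Set.mem_Icc]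
  constructor <;> norm_num

lemma dm_comm (u : DissimMap n) (i j : Fin n) : dm u i j = dm u j i := by
  unfold dm
  rcases lt_trichotomy i j with h | h | h
  · rw [dif_pos h, dif_neg (lt_asymm h), dif_pos h]
  · subst h; rfl
  · rw [dif_neg (lt_asymm h), dif_pos h, dif_pos h]

lemma dm_eq (u : DissimMap n) {i j : Fin n} (h : i < j) : dm u i j = u ⟨(i, j), h⟩ :=
  dif_pos h

lemma ultra_of_sorted {u : DissimMap n}
    (h : ∀ a b c : Fin n, a < b → b < c →
      dm u a b ≤ max (dm u a c) (dm u b c) ∧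
      dm u a c ≤ max (dm u a b) (dm u b c) ∧
      dm u b c ≤ max (dm u a b) (dm u a c)) :
    u ∈ Ultrametrics n := by
  intro i j k hij hik hjk
  rcases lt_trichotomy i j with h1 | h1 | h1
  · rcases lt_trichotomy j k with h2 | h2 | h2
    · exact (h i j k h1 h2).1
    · exact absurd h2 hjk
    · rcases lt_trichotomy i k with h3 | h3 | h3
      · have := (h i k j h3 h2).2.1
        rwa [dm_comm u k j] at this
      · exact absurd h3 hik
      · have := (h k i j h3 h1).2.2
        rwa [dm_comm u k i, dm_comm u k j] at this
  · exact absurd h1 hij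
  · rcases lt_trichotomy i k with h2 | h2 | h2
    · have := (h j i k h1 h2).1
      rwa [dm_comm u j i, max_comm] at this
    · exact absurd h2 hik
    · rcases lt_trichotomy j k with h3 | h3 | h3
      · have := (h j k i h3 h2).2.1
        rwa [dm_comm u j i, dm_comm u k i, max_comm] at this
      · exact absurd h3 hjk
      · have := (h k j i h3 h1).2.2
        rwa [dm_comm u j i, dm_comm u k j, dm_comm u k i, max_comm] at this

lemma SS_subset_ultra : SS n ⊆ Ultrametrics n := by
  intro u hu
  apply ultra_of_sorted
  intro a b c hab hbc
  have hac : a < c := hab.trans hbc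
  rw [dm_eq u hab, dm_eq u hbc, dm_eq u hac]
  set pab : PairIdx n := ⟨(a, b), hab⟩
  set pbc : PairIdx n := ⟨(b, c), hbc⟩
  set pac : PairIdx n := ⟨(a, c), hac⟩
  have hbval : b.val < c.val := hbc
  have hb' : b.val ≠ n - 1 := by
    have hc1 : c.val < n := c.isLt
    omega
  obtain ⟨hab_eq, hab_lo, hab_hi⟩ :
      u pab = u (pair0 pab) ∧ 2 * (b.val : ℝ) - 1 / 2 ≤ u pab ∧
        u pab ≤ 2 * (b.val : ℝ) + 1 / 2 := by
    obtain ⟨h1, h2⟩ := (hu pab).2 hb'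
    exact ⟨h1, h2.1, h2.2⟩
  by_cases hc : c.val = n - 1
  · have e1 : u pac = 2 * ((n - 1 : ℕ) : ℝ) + 1 / 2 := (hu pac).1 hc
    have e2 : u pbc = 2 * ((n - 1 : ℕ) : ℝ) + 1 / 2 := (hu pbc).1 hc
    have hbn : (b.val : ℝ) + 1 ≤ ((n - 1 : ℕ) : ℝ) := by
      have : b.val + 1 ≤ n - 1 := by omega
      exact_mod_cast this
    have hlt : u pab ≤ u pbc := by rw [e2]; linarith
    exact ⟨le_max_of_le_right hlt, by rw [e1, e2]; exact le_max_right _ _,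
      by rw [e1, e2]; exact le_max_right _ _⟩
  · have e1 := (hu pac).2 hc
    have e2 := (hu pbc).2 hc
    have hpp : pair0 pac = pair0 pbc := rfl
    have eq12 : u pac = u pbc := by rw [e1.1, e2.1, hpp]
    have hcc : 2 * (c.val : ℝ) - 1 / 2 ≤ u pbc := e2.2.1
    have hbn : (b.val : ℝ) + 1 ≤ (c.val : ℝ) := by exact_mod_cast hbval
    have hlt : u pab ≤ u pbc := by linarith
    exact ⟨le_max_of_le_right hlt, by rw [eq12]; exact le_max_right _ _,
      by rw [eq12]; exact le_max_right _ _⟩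

lemma dist_le_of_SS (hn : 3 ≤ n) {u : DissimMap n} (hu : u ∈ SS n) :
    dist (del n) u ≤ 1 / 2 := by
  rw [dist_pi_le_iff (by norm_num)]
  intro p
  rw [Real.dist_eq]
  obtain ⟨h1, h2⟩ := hu p
  by_cases hp : p.1.2.val = n - 1
  · rw [h1 hp]
    simp only [del, hp, and_true]
    split_ifs with h0
    · rw [abs_le]; constructor <;> norm_num
    · rw [abs_le]; constructor <;> norm_num
  · obtain ⟨-, hlo, hhi⟩ : _ ∧ 2 * (p.1.2.val : ℝ) - 1 / 2 ≤ u p ∧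
        u p ≤ 2 * (p.1.2.val : ℝ) + 1 / 2 := by
      obtain ⟨ha, hb⟩ := h2 hp
      exact ⟨ha, hb.1, hb.2⟩
    simp only [del, hp, and_false, if_false, add_zero]
    rw [abs_le]; constructor <;> linarith

lemma box_bound {u : DissimMap n} {r : ℝ} (h : dist (del n) u ≤ r) (p : PairIdx n) :
    |del n p - u p| ≤ r := by
  have := dist_le_pi_dist (del n) u p
  rw [Real.dist_eq] at this
  linarith

lemma lower (hn : 3 ≤ n) {u : DissimMap n} (hu : u ∈ Ultrametrics n) :
    1 / 2 ≤ dist (del n) u := by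
  set ε := dist (del n) u with hε
  have box : ∀ p : PairIdx n, |del n p - u p| ≤ ε := box_bound le_rfl
  set i0 : Fin n := ⟨0, by omega⟩
  set i1 : Fin n := ⟨1, by omega⟩
  set iN : Fin n := ⟨n - 1, by omega⟩
  have hlt01 : i0 < i1 := by simp +zetaDelta [Fin.lt_def, -Fin.val_fin_lt]
  have hlt1N : i1 < iN := by simp +zetaDelta [Fin.lt_def, -Fin.val_fin_lt]; omega
  have hlt0N : i0 < iN := by simp +zetaDelta [Fin.lt_def, -Fin.val_fin_lt]; omega
  have key := hu i0 iN i1 (ne_of_lt hlt0N) (ne_of_lt hlt01) (ne_of_gt hlt1N)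
  rw [dm_eq u hlt0N, dm_eq u hlt01, dm_comm u iN i1, dm_eq u hlt1N] at key
  have b1 := box ⟨(i0, i1), hlt01⟩
  have b2 := box ⟨(i1, iN), hlt1N⟩
  have b3 := box ⟨(i0, iN), hlt0N⟩
  have d1 : del n ⟨(i0, i1), hlt01⟩ = 2 := by
    simp only [del]
    rw [if_neg (by simp [i0, i1]; omega)]
    norm_num [i1]
  have d2 : del n ⟨(i1, iN), hlt1N⟩ = 2 * ((n - 1 : ℕ) : ℝ) := by
    simp only [del]
    rw [if_neg (by simp [i1])]
    norm_num [iN]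
  have d3 : del n ⟨(i0, iN), hlt0N⟩ = 2 * ((n - 1 : ℕ) : ℝ) + 1 := by
    simp only [del]
    rw [if_pos (by simp [i0, iN])]
  rw [d1, abs_le] at b1
  rw [d2, abs_le] at b2
  rw [d3, abs_le] at b3
  have hN : (2 : ℝ) ≤ ((n - 1 : ℕ) : ℝ) := by
    have : 2 ≤ n - 1 := by omega
    exact_mod_cast this
  rcases le_max_iff.mp key with hk | hk
  · linarith [b1.1, b1.2, b3.1, b3.2]
  · linarith [b2.1, b2.2, b3.1, b3.2]

lemma infD (hn : 3 ≤ n) : Metric.infDist (del n) (Ultrametrics n) = 1 / 2 := by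
  have hmem : ust n ∈ Ultrametrics n := SS_subset_ultra ust_mem_SS
  apply le_antisymm
  · exact le_trans (Metric.infDist_le_dist_of_mem hmem) (dist_le_of_SS hn ust_mem_SS)
  · by_contra hlt
    push_neg at hlt
    obtain ⟨y, hy, hd⟩ := (Metric.infDist_lt_iff ⟨ust n, hmem⟩).mp hlt
    exact absurd hd (not_lt.mpr (lower hn hy))

lemma del_ne (p : PairIdx n) (h : ¬(p.1.1.val = 0 ∧ p.1.2.val = n - 1)) :
    del n p = 2 * (p.1.2.val : ℝ) := by
  simp [del, h]

lemma closest_eq (hn : 3 ≤ n) :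
    closestPts (del n) (Ultrametrics n) = SS n := by
  ext u
  constructor
  · rintro ⟨hu, hd⟩
    rw [infD hn] at hd
    have box : ∀ p : PairIdx n, |del n p - u p| ≤ 1 / 2 := box_bound (le_of_eq hd)
    set i0 : Fin n := ⟨0, by omega⟩ with hi0
    set i1 : Fin n := ⟨1, by omega⟩ with hi1
    set iN : Fin n := ⟨n - 1, by omega⟩ with hiN
    have hlt01 : i0 < i1 := by simp +zetaDelta [Fin.lt_def, -Fin.val_fin_lt]
    have hlt1N : i1 < iN := by simp +zetaDelta [Fin.lt_def, -Fin.val_fin_lt]; omega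
    have hlt0N : i0 < iN := by simp +zetaDelta [Fin.lt_def, -Fin.val_fin_lt]; omega
    have hN : (2 : ℝ) ≤ ((n - 1 : ℕ) : ℝ) := by
      have : 2 ≤ n - 1 := by omega
      exact_mod_cast this
    -- Claim 0 : the value at the defect pair
    have claim0 : u ⟨(i0, iN), hlt0N⟩ = 2 * ((n - 1 : ℕ) : ℝ) + 1 / 2 := by
      have b1 := box ⟨(i0, i1), hlt01⟩
      have b2 := box ⟨(i1, iN), hlt1N⟩
      have b3 := box ⟨(i0, iN), hlt0N⟩
      have d1 : del n ⟨(i0, i1), hlt01⟩ = 2 := by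
        rw [del_ne _ (by simp [i0, i1]; omega)]; norm_num [i1]
      have d2 : del n ⟨(i1, iN), hlt1N⟩ = 2 * ((n - 1 : ℕ) : ℝ) := by
        rw [del_ne _ (by simp [i1])]
      have d3 : del n ⟨(i0, iN), hlt0N⟩ = 2 * ((n - 1 : ℕ) : ℝ) + 1 := by
        simp only [del]
        rw [if_pos (by simp [i0, iN])]
      rw [d1, abs_le] at b1
      rw [d2, abs_le] at b2
      rw [d3, abs_le] at b3
      have key := hu i0 iN i1 (ne_of_lt hlt0N) (ne_of_lt hlt01) (ne_of_gt hlt1N)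
      rw [dm_eq u hlt0N, dm_eq u hlt01, dm_comm u iN i1, dm_eq u hlt1N] at key
      have hup : u ⟨(i0, iN), hlt0N⟩ ≤ 2 * ((n - 1 : ℕ) : ℝ) + 1 / 2 := by
        rcases le_max_iff.mp key with hk | hk
        · linarith [b1.2]
        · linarith [b2.2]
      exact le_antisymm hup (by linarith [b3.1])
    -- Claim I : pairs ending at n-1
    have claimI : ∀ p : PairIdx n, p.1.2.val = n - 1 →
        u p = 2 * ((n - 1 : ℕ) : ℝ) + 1 / 2 := by
      intro p hp
      by_cases hi : p.1.1.val = 0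
      · have hpe : p = ⟨(i0, iN), hlt0N⟩ :=
          Subtype.ext (Prod.ext (Fin.ext hi) (Fin.ext hp))
        rw [hpe]; exact claim0
      · set a : Fin n := p.1.1 with ha
        have hav : 0 < a.val := Nat.pos_of_ne_zero hi
        have haN : a.val < n - 1 := by
          have := Fin.lt_def.mp p.2; omega
        have h0a : i0 < a := by simp [Fin.lt_def, -Fin.val_fin_lt]; omega
        have haNlt : a < iN := by simp [Fin.lt_def, -Fin.val_fin_lt]; omega
        have key := hu i0 iN a (ne_of_lt hlt0N) (ne_of_lt h0a) (ne_of_gt haNlt)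
        rw [dm_eq u hlt0N, dm_eq u h0a, dm_comm u iN a, dm_eq u haNlt, claim0] at key
        have b0a := box ⟨(i0, a), h0a⟩
        rw [del_ne _ (by simp; omega), abs_le] at b0a
        have baN := box ⟨(a, iN), haNlt⟩
        rw [del_ne _ (by simp [iN]; omega), abs_le] at baN
        have hcast : (a.val : ℝ) + 1 ≤ ((n - 1 : ℕ) : ℝ) := by
          have : a.val + 1 ≤ n - 1 := by omega
          exact_mod_cast this
        have hupper : u ⟨(a, iN), haNlt⟩ ≥ 2 * ((n - 1 : ℕ) : ℝ) + 1 / 2 := by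
          rcases le_max_iff.mp key with hk | hk
          · linarith [b0a.2]
          · exact hk
        have hpe : p = ⟨(a, iN), haNlt⟩ :=
          Subtype.ext (Prod.ext rfl (Fin.ext hp))
        rw [hpe]
        have : (iN.val : ℝ) = ((n - 1 : ℕ) : ℝ) := by norm_num [iN]
        refine le_antisymm ?_ hupper
        calc u ⟨(a, iN), haNlt⟩ ≤ 2 * (iN.val : ℝ) + 1 / 2 := by linarith [baN.2]
          _ = 2 * ((n - 1 : ℕ) : ℝ) + 1 / 2 := by rw [this]
    -- Claim II : other pairs
    have claimII : ∀ p : PairIdx n, p.1.2.val ≠ n - 1 →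
        u p = u (pair0 p) ∧
        u p ∈ Set.Icc (2 * (p.1.2.val : ℝ) - 1 / 2) (2 * (p.1.2.val : ℝ) + 1 / 2) := by
      intro p hp
      have bp := box p
      rw [del_ne _ (by simp [hp]), abs_le] at bp
      have hIcc : u p ∈ Set.Icc (2 * (p.1.2.val : ℝ) - 1 / 2) (2 * (p.1.2.val : ℝ) + 1 / 2) := by
        constructor <;> linarith [bp.1, bp.2]
      refine ⟨?_, hIcc⟩
      by_cases hi : p.1.1.val = 0
      · have hpe : p = pair0 p := Subtype.ext (Prod.ext (Fin.ext hi) rfl)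
        exact congrArg u hpe
      · set a : Fin n := p.1.1 with ha
        set c : Fin n := p.1.2 with hc
        have hav : 0 < a.val := Nat.pos_of_ne_zero hi
        have hac : a < c := p.2
        have h0a : i0 < a := by simp [Fin.lt_def, -Fin.val_fin_lt]; omega
        have h0c : i0 < c := lt_trans h0a hac
        have hcval : c.val ≤ n - 1 := by omega
        have b0a := box ⟨(i0, a), h0a⟩
        rw [del_ne _ (by simp; omega), abs_le] at b0a
        have b0c := box ⟨(i0, c), h0c⟩
        rw [del_ne _ (by simp [hp]), abs_le] at b0c
        have hcast : (a.val : ℝ) + 1 ≤ (c.val : ℝ) := by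
          have : a.val + 1 ≤ c.val := Fin.lt_def.mp hac
          exact_mod_cast this
        have k1 := hu i0 c a (ne_of_lt h0c) (ne_of_lt h0a) (ne_of_gt hac)
        rw [dm_eq u h0c, dm_eq u h0a, dm_comm u c a, dm_eq u hac] at k1
        have k2 := hu a c i0 (ne_of_lt hac) (ne_of_gt h0a) (ne_of_gt h0c)
        rw [dm_eq u hac, dm_comm u a i0, dm_eq u h0a, dm_comm u c i0, dm_eq u h0c] at k2
        have hpe : (⟨(a, c), hac⟩ : PairIdx n) = p := Subtype.ext rfl
        rw [hpe] at k1 k2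
        have hp0 : (⟨(i0, c), h0c⟩ : PairIdx n) = pair0 p := rfl
        rw [hp0] at k1 k2
        have l1 : u p ≤ u (pair0 p) := by
          rcases le_max_iff.mp k2 with hk | hk
          · linarith [b0a.2, hIcc.1]
          · exact hk
        have l2 : u (pair0 p) ≤ u p := by
          rcases le_max_iff.mp k1 with hk | hk
          · have hlow : 2 * (c.val : ℝ) - 1 / 2 ≤ u (pair0 p) := by
              have := b0c.1; linarith
            linarith [b0a.2]
          · exact hk
        exact le_antisymm l1 l2
    exact fun p => ⟨claimI p, claimII p⟩
  · intro hu
    refine ⟨SS_subset_ultra hu, ?_⟩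
    rw [infD hn]
    exact le_antisymm (dist_le_of_SS hn hu) (lower hn (SS_subset_ultra hu))

lemma SS_convex : Convex ℝ (SS n) := by
  intro u hu v hv a b ha hb hab
  intro p
  have happ : ∀ q : PairIdx n, (a • u + b • v) q = a * u q + b * v q := fun q => rfl
  obtain ⟨h1u, h2u⟩ := hu p
  obtain ⟨h1v, h2v⟩ := hv p
  constructor
  · intro hp
    rw [happ, h1u hp, h1v hp]
    linear_combination (2 * ((n - 1 : ℕ) : ℝ) + 1 / 2) * hab
  · intro hp
    obtain ⟨heu, hiu⟩ := h2u hp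
    obtain ⟨hev, hiv⟩ := h2v hp
    rw [Set.mem_Icc] at hiu hiv
    refine ⟨?_, Set.mem_Icc.mpr ⟨?_, ?_⟩⟩
    · rw [happ, happ, heu, hev]
    · rw [happ]
      have l1 := mul_le_mul_of_nonneg_left hiu.1 ha
      have l2 := mul_le_mul_of_nonneg_left hiv.1 hb
      nlinarith [hiu.1, hiv.1]
    · rw [happ]
      have l1 := mul_le_mul_of_nonneg_left hiu.2 ha
      have l2 := mul_le_mul_of_nonneg_left hiv.2 hb
      nlinarith [hiu.2, hiv.2]

/-- the free directions -/
noncomputable def wj (n : ℕ) (j : Fin (n - 2)) : DissimMap n := fun p =>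
  if p.1.2.val = j.val + 1 then 1 else 0

/-- the pair (0, j+1) -/
def Pj (hn : 3 ≤ n) (j : Fin (n - 2)) : PairIdx n :=
  ⟨(⟨0, by omega⟩, ⟨j.val + 1, by have := j.isLt; omega⟩), by simp [Fin.lt_def, -Fin.val_fin_lt]⟩

lemma vectorSpan_SS (hn : 3 ≤ n) :
    vectorSpan ℝ (SS n) = Submodule.span ℝ (Set.range (wj n)) := by
  apply le_antisymm
  · rw [vectorSpan_def]
    apply Submodule.span_le.mpr
    rintro x ⟨u, hu, v, hv, rfl⟩
    have hx : u -ᵥ v = ∑ j : Fin (n - 2), (u (Pj hn j) - v (Pj hn j)) • wj n j := by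
      funext p
      have hlhs : (u -ᵥ v) p = u p - v p := rfl
      rw [hlhs, Finset.sum_apply]
      simp only [Pi.smul_apply, smul_eq_mul, wj]
      by_cases hp : p.1.2.val = n - 1
      · rw [(hu p).1 hp, (hv p).1 hp, Finset.sum_eq_zero]
        · ring
        · intro j _
          rw [if_neg (by have := j.isLt; omega), mul_zero]
      · have h1 : 1 ≤ p.1.2.val := pair_pos p
        have h2 : p.1.2.val ≤ n - 2 := by have := p.1.2.isLt; omega
        set j0 : Fin (n - 2) := ⟨p.1.2.val - 1, by omega⟩ with hj0
        rw [Finset.sum_eq_single j0]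
        · rw [if_pos (by simp [hj0]; omega), mul_one]
          have hP : Pj hn j0 = pair0 p := by
            apply Subtype.ext
            apply Prod.ext
            · rfl
            · exact Fin.ext (by simp [Pj, hj0, pair0]; omega)
          rw [hP, ((hu p).2 hp).1, ((hv p).2 hp).1]
        · intro j _ hj
          rw [if_neg, mul_zero]
          intro hcond
          exact hj (Fin.ext (by simp [hj0]; omega))
        · intro h; exact absurd (Finset.mem_univ j0) h
    show u -ᵥ v ∈ (Submodule.span ℝ (Set.range (wj n)) : Set (DissimMap n))
    rw [hx]
    exact Submodule.sum_mem _ fun j _ =>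
      Submodule.smul_mem _ _ (Submodule.subset_span ⟨j, rfl⟩)
  · apply Submodule.span_le.mpr
    rintro x ⟨j, rfl⟩
    have hmem : ust n + (1 / 2 : ℝ) • wj n j ∈ SS n := by
      intro p
      have happ : ∀ q : PairIdx n,
          (ust n + (1 / 2 : ℝ) • wj n j) q = ust n q + (1 / 2) * wj n j q := fun q => rfl
      constructor
      · intro hp
        rw [happ]
        have w0 : wj n j p = 0 := if_neg (by have := j.isLt; omega)
        have u0 : ust n p = 2 * ((n - 1 : ℕ) : ℝ) + 1 / 2 := if_pos hp
        rw [w0, u0]; ring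
      · intro hp
        refine ⟨rfl, ?_⟩
        rw [happ]
        have u0 : ust n p = 2 * (p.1.2.val : ℝ) := if_neg hp
        rw [u0, Set.mem_Icc]
        by_cases hc : p.1.2.val = j.val + 1
        · rw [show wj n j p = 1 from if_pos hc]
          constructor <;> linarith
        · rw [show wj n j p = 0 from if_neg hc]
          constructor <;> linarith
    have key := vsub_mem_vectorSpan ℝ hmem (ust_mem_SS (n := n))
    have hv : (ust n + (1 / 2 : ℝ) • wj n j) -ᵥ ust n = (1 / 2 : ℝ) • wj n j :=
      add_sub_cancel_left _ _
    rw [hv] at key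
    have key2 := Submodule.smul_mem (vectorSpan ℝ (SS n)) (2 : ℝ) key
    rw [smul_smul] at key2
    norm_num at key2
    exact key2

lemma wj_li (hn : 3 ≤ n) : LinearIndependent ℝ (wj n) := by
  rw [Fintype.linearIndependent_iff]
  intro g hg j
  have hev := congrFun hg (Pj hn j)
  rw [Finset.sum_apply] at hev
  simp only [Pi.smul_apply, smul_eq_mul, wj, Pi.zero_apply] at hev
  rw [Finset.sum_eq_single j] at hev
  · have hrfl : ((Pj hn j).1.2.val) = j.val + 1 := rfl
    rwa [if_pos hrfl, mul_one] at hev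
  · intro i _ hij
    rw [if_neg, mul_zero]
    intro hcond
    exact hij (Fin.ext (by simp [Pj] at hcond; omega))
  · intro h; exact absurd (Finset.mem_univ j) h

lemma finrank_SS (hn : 3 ≤ n) :
    Module.finrank ℝ (vectorSpan ℝ (SS n)) = n - 2 := by
  rw [vectorSpan_SS hn, finrank_span_eq_card (wj_li hn), Fintype.card_fin]

end CUD

/-- for every `n ≥ 3` there is a dissimilarity map whose set of
`l∞`-closest ultrametrics is convex of dimension `n - 2`. -/
theorem exists_closest_ultrametrics_dim (n : ℕ) (hn : 3 ≤ n) :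
    ∃ δ : DissimMap n,
      Convex ℝ (closestPts δ (Ultrametrics n)) ∧
      Module.finrank ℝ (affineSpan ℝ (closestPts δ (Ultrametrics n))).direction = n - 2 := by
  refine ⟨CUD.del n, ?_, ?_⟩
  · rw [CUD.closest_eq hn]; exact CUD.SS_convex
  · rw [CUD.closest_eq hn, direction_affineSpan, CUD.finrank_SS hn]
end

section
/- Let δ = (5,8,9,6,9,9) ∈ ℝ^6 in coordinates (x_12, x_13, x_14, x_23, x_24, x_34). Then d(δ, U_4) = 1; every u ∈ C(δ, U_4) satisfies u_12 < u_13 = u_23 < u_14 = u_24 = u_34 (so every l∞-closest ultrametric to δ has the rooted topology (4(3(12))); and the set C(δ, U_4) is convex with affine hull of dimension 2. -/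
namespace Stm11

local notation "δ4" => ofMat !![(0:ℝ),5,8,9; 5,0,6,9; 8,6,0,9; 9,9,9,0]

def p01 : PairIdx 4 := ⟨(0,1), by decide⟩
def p02 : PairIdx 4 := ⟨(0,2), by decide⟩
def p03 : PairIdx 4 := ⟨(0,3), by decide⟩
def p12 : PairIdx 4 := ⟨(1,2), by decide⟩
def p13 : PairIdx 4 := ⟨(1,3), by decide⟩
def p23 : PairIdx 4 := ⟨(2,3), by decide⟩

def pt (a s : ℝ) : DissimMap 4 :=
  fun p => if p.1.1 = 0 ∧ p.1.2 = 1 then a else if p.1.2 = 3 then s else 7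

lemma pt_mem_ultra {a s : ℝ} (ha : a ≤ 7) (hs : 7 ≤ s) : pt a s ∈ Ultrametrics 4 := by
  intro i j k hij hik hjk
  fin_cases i <;> fin_cases j <;> fin_cases k <;>
    first
      | exact absurd rfl hij
      | exact absurd rfl hik
      | exact absurd rfl hjk
      | (simp (config := { decide := true }) [dm, pt, le_max_iff] <;>
          first | (left; linarith) | (right; linarith) | linarith)

lemma dist_pt_le {a s : ℝ} (h4 : 4 ≤ a) (h6 : a ≤ 6) (h8 : 8 ≤ s) (h10 : s ≤ 10) :
    dist (δ4) (pt a s) ≤ 1 := by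
  rw [dist_pi_le_iff (by norm_num)]
  rintro ⟨⟨i, j⟩, hij⟩
  fin_cases i <;> fin_cases j <;>
    first
      | exact absurd hij (by decide)
      | (show |(5:ℝ) - a| ≤ 1; rw [abs_le]; constructor <;> linarith)
      | (show |(8:ℝ) - 7| ≤ 1; norm_num)
      | (show |(9:ℝ) - s| ≤ 1; rw [abs_le]; constructor <;> linarith)
      | (show |(6:ℝ) - 7| ≤ 1; norm_num)

lemma one_le_dist {u : DissimMap 4} (hu : u ∈ Ultrametrics 4) : 1 ≤ dist (δ4) u := by
  have h01 : |(5:ℝ) - u p01| ≤ dist (δ4) u := by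
    simpa [Real.dist_eq, show (δ4) p01 = 5 from rfl] using dist_le_pi_dist (δ4) u p01
  have h02 : |(8:ℝ) - u p02| ≤ dist (δ4) u := by
    simpa [Real.dist_eq, show (δ4) p02 = 8 from rfl] using dist_le_pi_dist (δ4) u p02
  have h12 : |(6:ℝ) - u p12| ≤ dist (δ4) u := by
    simpa [Real.dist_eq, show (δ4) p12 = 6 from rfl] using dist_le_pi_dist (δ4) u p12
  have key : u p02 ≤ max (u p01) (u p12) := hu 0 2 1 (by decide) (by decide) (by decide)
  rw [abs_le] at h01 h02 h12
  rcases le_max_iff.mp key with h | h <;> linarith [h01.1, h01.2, h02.1, h02.2, h12.1, h12.2]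

lemma ultra_nonempty : (Ultrametrics 4).Nonempty :=
  ⟨pt 5 9, pt_mem_ultra (by norm_num) (by norm_num)⟩

lemma infDist_eq : Metric.infDist (δ4) (Ultrametrics 4) = 1 := by
  refine le_antisymm ?_ ?_
  · exact (Metric.infDist_le_dist_of_mem (pt_mem_ultra (by norm_num) (by norm_num))).trans
      (dist_pt_le (a := 5) (s := 9) (by norm_num) (by norm_num) (by norm_num) (by norm_num))
  · refine le_of_not_gt fun h => ?_
    obtain ⟨y, hy, hdy⟩ := (Metric.infDist_lt_iff ultra_nonempty).mp h
    exact absurd hdy (not_lt.mpr (one_le_dist hy))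

/-- The candidate closest set. -/
def Cset : Set (DissimMap 4) :=
  {u | ∃ a s : ℝ, 4 ≤ a ∧ a ≤ 6 ∧ 8 ≤ s ∧ s ≤ 10 ∧ u = pt a s}

lemma closest_eq : closestPts (δ4) (Ultrametrics 4) = Cset := by
  ext u
  constructor
  · rintro ⟨hu, hd⟩
    rw [infDist_eq] at hd
    have habs : ∀ p : PairIdx 4, |(δ4) p - u p| ≤ 1 := by
      intro p
      rw [← hd]
      simpa [Real.dist_eq] using dist_le_pi_dist (δ4) u p
    have h01 := abs_le.mp (habs p01)
    have h02 := abs_le.mp (habs p02)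
    have h03 := abs_le.mp (habs p03)
    have h12 := abs_le.mp (habs p12)
    have h13 := abs_le.mp (habs p13)
    have h23 := abs_le.mp (habs p23)
    simp only [show (δ4) p01 = 5 from rfl, show (δ4) p02 = 8 from rfl,
      show (δ4) p03 = 9 from rfl, show (δ4) p12 = 6 from rfl,
      show (δ4) p13 = 9 from rfl, show (δ4) p23 = 9 from rfl] at h01 h02 h03 h12 h13 h23
    -- ultrametric inequalities
    have k1 : u p02 ≤ max (u p01) (u p12) := hu 0 2 1 (by decide) (by decide) (by decide)
    have k2 : u p03 ≤ max (u p01) (u p13) := hu 0 3 1 (by decide) (by decide) (by decide)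
    have k3 : u p13 ≤ max (u p01) (u p03) := hu 1 3 0 (by decide) (by decide) (by decide)
    have k4 : u p03 ≤ max (u p02) (u p23) := hu 0 3 2 (by decide) (by decide) (by decide)
    have k5 : u p23 ≤ max (u p02) (u p03) := hu 2 3 0 (by decide) (by decide) (by decide)
    have e02 : u p02 = 7 := by
      rcases le_max_iff.mp k1 with h | h <;> linarith [h01.2, h02.1, h12.2]
    have e12 : u p12 = 7 := by
      rcases le_max_iff.mp k1 with h | h <;> linarith [h01.2, h02.1, h12.2]
    have e13 : u p13 = u p03 := by
      rcases le_max_iff.mp k2 with h | h <;> rcases le_max_iff.mp k3 with h' | h' <;>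
        linarith [h01.2, h03.1, h13.1]
    have e23 : u p23 = u p03 := by
      rcases le_max_iff.mp k4 with h | h <;> rcases le_max_iff.mp k5 with h' | h' <;>
        linarith [h03.1, h23.1, e02]
    refine ⟨u p01, u p03, by linarith [h01.1], by linarith [h01.2], by linarith [h03.1],
      by linarith [h03.2], ?_⟩
    funext p
    obtain ⟨⟨i, j⟩, hij⟩ := p
    fin_cases i <;> fin_cases j <;>
      first
        | exact absurd hij (by decide)
        | exact rfl
        | exact e02
        | exact e12
        | exact e13
        | exact e23
  · rintro ⟨a, s, h4, h6, h8, h10, rfl⟩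
    have hU := pt_mem_ultra (a := a) (s := s) (by linarith) (by linarith)
    refine ⟨hU, ?_⟩
    rw [infDist_eq]
    exact le_antisymm (dist_pt_le h4 h6 h8 h10) (one_le_dist hU)

def e1 : DissimMap 4 := fun p => if p.1.1 = 0 ∧ p.1.2 = 1 then 1 else 0
def e2 : DissimMap 4 := fun p => if p.1.2 = 3 then 1 else 0

lemma span_eq : vectorSpan ℝ Cset = Submodule.span ℝ {e1, e2} := by
  apply le_antisymm
  · rw [vectorSpan_def, Submodule.span_le]
    rintro w hw
    rw [Set.mem_vsub] at hw
    obtain ⟨x, hx, y, hy, rfl⟩ := hw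
    obtain ⟨a, s, _, _, _, _, rfl⟩ := hx
    obtain ⟨a', s', _, _, _, _, rfl⟩ := hy
    have : pt a s -ᵥ pt a' s' = (a - a') • e1 + (s - s') • e2 := by
      funext p
      simp only [vsub_eq_sub, Pi.sub_apply, Pi.add_apply, Pi.smul_apply, smul_eq_mul,
        pt, e1, e2]
      split_ifs <;> first | ring1 | (exfalso; simp_all (config := { decide := true }); done) | linarith | norm_num
    rw [this]
    exact Submodule.add_mem _
      (Submodule.smul_mem _ _ (Submodule.subset_span (Set.mem_insert _ _)))
      (Submodule.smul_mem _ _ (Submodule.subset_span (Set.mem_insert_of_mem _ rfl)))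
  · rw [Submodule.span_le]
    rintro w (rfl | rfl)
    · have : e1 = pt 5 9 -ᵥ pt 4 9 := by
        funext p
        simp only [vsub_eq_sub, Pi.sub_apply, pt, e1]
        split_ifs <;> first | ring1 | (exfalso; simp_all (config := { decide := true }); done) | linarith | norm_num
      rw [this]
      exact vsub_mem_vectorSpan ℝ ⟨5, 9, by norm_num, by norm_num, by norm_num, by norm_num, rfl⟩
        ⟨4, 9, by norm_num, by norm_num, by norm_num, by norm_num, rfl⟩
    · have : e2 = pt 5 9 -ᵥ pt 5 8 := by
        funext p
        simp only [vsub_eq_sub, Pi.sub_apply, pt, e2]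
        split_ifs <;> first | ring1 | (exfalso; simp_all (config := { decide := true }); done) | linarith | norm_num
      rw [this]
      exact vsub_mem_vectorSpan ℝ ⟨5, 9, by norm_num, by norm_num, by norm_num, by norm_num, rfl⟩
        ⟨5, 8, by norm_num, by norm_num, by norm_num, by norm_num, rfl⟩

lemma li : LinearIndependent ℝ ![e1, e2] := by
  rw [LinearIndependent.pair_iff]
  intro s t h
  have h1 := congrFun h p01
  have h2 := congrFun h p03
  simp (config := { decide := true }) [e1, e2, p01, p03] at h1 h2
  exact ⟨h1, h2⟩

lemma finrank_eq : Module.finrank ℝ (vectorSpan ℝ Cset) = 2 := by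
  have hr : Set.range ![e1, e2] = {e1, e2} := by
    ext x
    simp only [Set.mem_range, Fin.exists_fin_two, Matrix.cons_val_zero, Matrix.cons_val_one,
      Matrix.head_cons, Set.mem_insert_iff, Set.mem_singleton_iff, eq_comm]
  rw [span_eq, ← hr, finrank_span_eq_card li]
  simp

end Stm11

/-- for `δ = (5,8,9,6,9,9)` (coordinates `(x₁₂,x₁₃,x₁₄,x₂₃,x₂₄,x₃₄)`),
`d(δ, U₄) = 1`, every `l∞`-closest ultrametric `u` satisfies
`u₁₂ < u₁₃ = u₂₃ < u₁₄ = u₂₄ = u₃₄` (topology `(4(3(12)))`), and the set of closest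
ultrametrics is convex of dimension `2`. -/
theorem closest_ultrametrics_dim_two :
    Metric.infDist (ofMat !![0,5,8,9; 5,0,6,9; 8,6,0,9; 9,9,9,0]) (Ultrametrics 4) = 1 ∧
    (∀ u ∈ closestPts (ofMat !![0,5,8,9; 5,0,6,9; 8,6,0,9; 9,9,9,0]) (Ultrametrics 4),
      dm u 0 1 < dm u 0 2 ∧ dm u 0 2 = dm u 1 2 ∧ dm u 0 2 < dm u 0 3 ∧
      dm u 0 3 = dm u 1 3 ∧ dm u 1 3 = dm u 2 3) ∧
    Convex ℝ (closestPts (ofMat !![0,5,8,9; 5,0,6,9; 8,6,0,9; 9,9,9,0]) (Ultrametrics 4)) ∧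
    Module.finrank ℝ (affineSpan ℝ (closestPts
      (ofMat !![0,5,8,9; 5,0,6,9; 8,6,0,9; 9,9,9,0]) (Ultrametrics 4))).direction = 2 := by
  refine ⟨Stm11.infDist_eq, ?_, ?_, ?_⟩
  · intro u hu
    rw [Stm11.closest_eq] at hu
    obtain ⟨a, s, h4, h6, h8, h10, rfl⟩ := hu
    refine ⟨?_, ?_, ?_, ?_, ?_⟩ <;>
      simp only [show dm (Stm11.pt a s) 0 1 = a from rfl, show dm (Stm11.pt a s) 0 2 = 7 from rfl,
        show dm (Stm11.pt a s) 1 2 = 7 from rfl, show dm (Stm11.pt a s) 0 3 = s from rfl,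
        show dm (Stm11.pt a s) 1 3 = s from rfl, show dm (Stm11.pt a s) 2 3 = s from rfl] <;>
      linarith
  · rw [Stm11.closest_eq]
    rintro u ⟨a, s, h4, h6, h8, h10, rfl⟩ v ⟨a', s', h4', h6', h8', h10', rfl⟩ α β hα hβ hαβ
    refine ⟨α * a + β * a', α * s + β * s', by nlinarith, by nlinarith, by nlinarith,
      by nlinarith, ?_⟩
    funext p
    simp only [Pi.add_apply, Pi.smul_apply, smul_eq_mul, Stm11.pt]
    split_ifs <;> first | ring1 | (exfalso; simp_all (config := { decide := true }); done) | linarith | norm_num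
  · rw [Stm11.closest_eq, direction_affineSpan]
    exact Stm11.finrank_eq
end

section
/- Let δ ∈ ℝ^15 be the dissimilarity map on {1,…,6} with coordinates (δ_12, δ_13, δ_14, δ_15, δ_16, δ_23, δ_24, δ_25, δ_26, δ_34, δ_35, δ_36, δ_45, δ_46, δ_56) = (35, 22, 32, 49, 42, 26, 34, 23, 32, 39, 41, 34, 46, 49, 32). Then d(δ, T_6) = d(δ, G_{2,6}) = 5, the sets C(δ, T_6) and C(δ, G_{2,6}) coincide, and this set of l∞-closest points is not topologically connected. -/
/-- The set of tree metrics on `n` elements: positive off the diagonal and satisfying the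
four-point condition for all (not necessarily distinct) quadruples, with the convention
`x_ii = 0` built into `dm`. -/
def TreeMetrics (n : ℕ) : Set (DissimMap n) :=
  {x | (∀ i j : Fin n, i ≠ j → 0 < dm x i j) ∧
    ∀ i j k l : Fin n,
      dm x i j + dm x k l ≤ max (dm x i k + dm x j l) (dm x i l + dm x j k)}

/-- The tropical Grassmannian `G_{2,n}`: points satisfying the four-point condition for
all quadruples of pairwise distinct elements. -/
def TropGrass (n : ℕ) : Set (DissimMap n) :=
  {x | ∀ i j k l : Fin n, i ≠ j → i ≠ k → i ≠ l → j ≠ k → j ≠ l → k ≠ l →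
    dm x i j + dm x k l ≤ max (dm x i k + dm x j l) (dm x i l + dm x j k)}

section Aux

def P01 : PairIdx 6 := ⟨(0,1), by decide⟩
def P02 : PairIdx 6 := ⟨(0,2), by decide⟩
def P03 : PairIdx 6 := ⟨(0,3), by decide⟩
def P04 : PairIdx 6 := ⟨(0,4), by decide⟩
def P05 : PairIdx 6 := ⟨(0,5), by decide⟩
def P12 : PairIdx 6 := ⟨(1,2), by decide⟩
def P13 : PairIdx 6 := ⟨(1,3), by decide⟩
def P14 : PairIdx 6 := ⟨(1,4), by decide⟩
def P15 : PairIdx 6 := ⟨(1,5), by decide⟩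
def P23 : PairIdx 6 := ⟨(2,3), by decide⟩
def P24 : PairIdx 6 := ⟨(2,4), by decide⟩
def P25 : PairIdx 6 := ⟨(2,5), by decide⟩
def P34 : PairIdx 6 := ⟨(3,4), by decide⟩
def P35 : PairIdx 6 := ⟨(3,5), by decide⟩
def P45 : PairIdx 6 := ⟨(4,5), by decide⟩

noncomputable def δ6 : DissimMap 6 :=
  ofMat !![0,35,22,32,49,42; 35,0,26,34,23,32; 22,26,0,39,41,34;
           32,34,39,0,46,49; 49,23,41,46,0,32; 42,32,34,49,32,0]


def fin6_cases : ∀ i : Fin 6, i = 0 ∨ i = 1 ∨ i = 2 ∨ i = 3 ∨ i = 4 ∨ i = 5 := by decide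

def pair_cases : ∀ p : PairIdx 6,
    p = P01 ∨ p = P02 ∨ p = P03 ∨ p = P04 ∨ p = P05 ∨ p = P12 ∨ p = P13 ∨ p = P14 ∨
    p = P15 ∨ p = P23 ∨ p = P24 ∨ p = P25 ∨ p = P34 ∨ p = P35 ∨ p = P45 := by decide

lemma dm_self {n : ℕ} (x : DissimMap n) (i : Fin n) : dm x i i = 0 := by
  unfold dm; rw [dif_neg (lt_irrefl i), dif_neg (lt_irrefl i)]

lemma dm_comm_s14 {n : ℕ} (x : DissimMap n) (i j : Fin n) : dm x i j = dm x j i := by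
  unfold dm
  rcases lt_trichotomy i j with h|h|h
  · rw [dif_pos h, dif_neg (asymm h), dif_pos h]
  · subst h; rfl
  · rw [dif_neg (asymm h), dif_pos h, dif_pos h]

lemma tree_sub : TreeMetrics 6 ⊆ TropGrass 6 :=
  fun x hx i j k l _ _ _ _ _ _ => hx.2 i j k l

lemma fourpt_all {n : ℕ} (x : DissimMap n)
    (h4 : ∀ i j k l : Fin n, i ≠ j → i ≠ k → i ≠ l → j ≠ k → j ≠ l → k ≠ l →
      dm x i j + dm x k l ≤ max (dm x i k + dm x j l) (dm x i l + dm x j k))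
    (htri : ∀ i k l : Fin n, dm x k l ≤ dm x i k + dm x i l) :
    ∀ i j k l : Fin n, dm x i j + dm x k l ≤ max (dm x i k + dm x j l) (dm x i l + dm x j k) := by
  intro i j k l
  rcases eq_or_ne i j with rfl|hij
  · rw [dm_self, zero_add]
    exact le_max_of_le_left (htri i k l)
  rcases eq_or_ne k l with rfl|hkl
  · rw [dm_self, add_zero]
    refine le_max_of_le_left ?_
    have h := htri k i j
    rwa [dm_comm_s14 x k i, dm_comm_s14 x k j] at h
  rcases eq_or_ne i k with rfl|hik
  · exact le_max_of_le_right (le_of_eq (by rw [dm_comm_s14 x j i]; ring))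
  rcases eq_or_ne i l with rfl|hil
  · exact le_max_of_le_left (le_of_eq (by rw [dm_comm_s14 x k i, dm_comm_s14 x j i]; ring))
  rcases eq_or_ne j k with rfl|hjk
  · exact le_max_of_le_left (le_refl _)
  rcases eq_or_ne j l with rfl|hjl
  · exact le_max_of_le_right (le_of_eq (by rw [dm_comm_s14 x k j]))
  exact h4 i j k l hij hik hil hjk hjl hkl

def BW1 : Matrix (Fin 6) (Fin 6) ℤ := !![0,32,27,37,44,43; 32,0,28,39,28,27; 27,28,0,34,40,39; 37,39,34,0,51,50; 44,28,40,51,0,37; 43,27,39,50,37,0]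
def BW2 : Matrix (Fin 6) (Fin 6) ℤ := !![0,34,27,37,44,42; 34,0,31,36,28,27; 27,31,0,34,41,39; 37,36,34,0,46,44; 44,28,41,46,0,37; 42,27,39,44,37,0]

noncomputable def wit1 : DissimMap 6 := fun p => ((BW1 p.1.1 p.1.2 : ℤ) : ℝ)
noncomputable def wit2 : DissimMap 6 := fun p => ((BW2 p.1.1 p.1.2 : ℤ) : ℝ)

lemma dm_int (B : Matrix (Fin 6) (Fin 6) ℤ) (hs : ∀ i j, B i j = B j i)
    (hd : ∀ i, B i i = 0) (i j : Fin 6) :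
    dm (fun p => ((B p.1.1 p.1.2 : ℤ) : ℝ)) i j = ((B i j : ℤ) : ℝ) := by
  unfold dm
  rcases lt_trichotomy i j with h|h|h
  · rw [dif_pos h]
  · subst h; rw [dif_neg (lt_irrefl i), dif_neg (lt_irrefl i), hd]; simp
  · rw [dif_neg (asymm h), dif_pos h]
    show ((B j i : ℤ) : ℝ) = ((B i j : ℤ) : ℝ)
    rw [hs j i]

lemma mem_tree_int (B : Matrix (Fin 6) (Fin 6) ℤ) (hs : ∀ i j, B i j = B j i)
    (hd : ∀ i, B i i = 0) (hpos : ∀ i j, i ≠ j → 0 < B i j)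
    (h4 : ∀ i j k l : Fin 6, B i j + B k l ≤ max (B i k + B j l) (B i l + B j k)) :
    (fun p => ((B p.1.1 p.1.2 : ℤ) : ℝ)) ∈ TreeMetrics 6 := by
  constructor
  · intro i j hij
    rw [dm_int B hs hd]
    exact_mod_cast hpos i j hij
  · intro i j k l
    rw [dm_int B hs hd, dm_int B hs hd, dm_int B hs hd, dm_int B hs hd,
      dm_int B hs hd, dm_int B hs hd]
    have h := h4 i j k l
    have hc : (((max (B i k + B j l) (B i l + B j k) : ℤ)) : ℝ)
        = max (((B i k : ℤ) : ℝ) + ((B j l : ℤ) : ℝ)) (((B i l : ℤ) : ℝ) + ((B j k : ℤ) : ℝ)) := by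
      push_cast; rfl
    calc ((B i j : ℤ) : ℝ) + ((B k l : ℤ) : ℝ) = (((B i j + B k l : ℤ)) : ℝ) := by push_cast; rfl
    _ ≤ (((max (B i k + B j l) (B i l + B j k) : ℤ)) : ℝ) := by exact_mod_cast h
    _ = _ := hc

lemma wit1_mem : wit1 ∈ TreeMetrics 6 :=
  mem_tree_int BW1 (by intro i j; fin_cases i <;> fin_cases j <;> decide) (by decide) (by intro i j; fin_cases i <;> fin_cases j <;> decide) (by decide)

lemma wit2_mem : wit2 ∈ TreeMetrics 6 :=
  mem_tree_int BW2 (by intro i j; fin_cases i <;> fin_cases j <;> decide) (by decide) (by intro i j; fin_cases i <;> fin_cases j <;> decide) (by decide)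

lemma dist_wit1 : dist δ6 wit1 ≤ 5 := by
  rw [dist_pi_le_iff (by norm_num)]
  intro p
  rcases pair_cases p with rfl|rfl|rfl|rfl|rfl|rfl|rfl|rfl|rfl|rfl|rfl|rfl|rfl|rfl|rfl
  · rw [show δ6 P01 = (35:ℝ) from rfl, show wit1 P01 = ((32:ℤ):ℝ) from rfl, Real.dist_eq]
    norm_num
  · rw [show δ6 P02 = (22:ℝ) from rfl, show wit1 P02 = ((27:ℤ):ℝ) from rfl, Real.dist_eq]
    norm_num
  · rw [show δ6 P03 = (32:ℝ) from rfl, show wit1 P03 = ((37:ℤ):ℝ) from rfl, Real.dist_eq]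
    norm_num
  · rw [show δ6 P04 = (49:ℝ) from rfl, show wit1 P04 = ((44:ℤ):ℝ) from rfl, Real.dist_eq]
    norm_num
  · rw [show δ6 P05 = (42:ℝ) from rfl, show wit1 P05 = ((43:ℤ):ℝ) from rfl, Real.dist_eq]
    norm_num
  · rw [show δ6 P12 = (26:ℝ) from rfl, show wit1 P12 = ((28:ℤ):ℝ) from rfl, Real.dist_eq]
    norm_num
  · rw [show δ6 P13 = (34:ℝ) from rfl, show wit1 P13 = ((39:ℤ):ℝ) from rfl, Real.dist_eq]
    norm_num
  · rw [show δ6 P14 = (23:ℝ) from rfl, show wit1 P14 = ((28:ℤ):ℝ) from rfl, Real.dist_eq]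
    norm_num
  · rw [show δ6 P15 = (32:ℝ) from rfl, show wit1 P15 = ((27:ℤ):ℝ) from rfl, Real.dist_eq]
    norm_num
  · rw [show δ6 P23 = (39:ℝ) from rfl, show wit1 P23 = ((34:ℤ):ℝ) from rfl, Real.dist_eq]
    norm_num
  · rw [show δ6 P24 = (41:ℝ) from rfl, show wit1 P24 = ((40:ℤ):ℝ) from rfl, Real.dist_eq]
    norm_num
  · rw [show δ6 P25 = (34:ℝ) from rfl, show wit1 P25 = ((39:ℤ):ℝ) from rfl, Real.dist_eq]
    norm_num
  · rw [show δ6 P34 = (46:ℝ) from rfl, show wit1 P34 = ((51:ℤ):ℝ) from rfl, Real.dist_eq]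
    norm_num
  · rw [show δ6 P35 = (49:ℝ) from rfl, show wit1 P35 = ((50:ℤ):ℝ) from rfl, Real.dist_eq]
    norm_num
  · rw [show δ6 P45 = (32:ℝ) from rfl, show wit1 P45 = ((37:ℤ):ℝ) from rfl, Real.dist_eq]
    norm_num

lemma dist_wit2 : dist δ6 wit2 ≤ 5 := by
  rw [dist_pi_le_iff (by norm_num)]
  intro p
  rcases pair_cases p with rfl|rfl|rfl|rfl|rfl|rfl|rfl|rfl|rfl|rfl|rfl|rfl|rfl|rfl|rfl
  · rw [show δ6 P01 = (35:ℝ) from rfl, show wit2 P01 = ((34:ℤ):ℝ) from rfl, Real.dist_eq]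
    norm_num
  · rw [show δ6 P02 = (22:ℝ) from rfl, show wit2 P02 = ((27:ℤ):ℝ) from rfl, Real.dist_eq]
    norm_num
  · rw [show δ6 P03 = (32:ℝ) from rfl, show wit2 P03 = ((37:ℤ):ℝ) from rfl, Real.dist_eq]
    norm_num
  · rw [show δ6 P04 = (49:ℝ) from rfl, show wit2 P04 = ((44:ℤ):ℝ) from rfl, Real.dist_eq]
    norm_num
  · rw [show δ6 P05 = (42:ℝ) from rfl, show wit2 P05 = ((42:ℤ):ℝ) from rfl, Real.dist_eq]
    norm_num
  · rw [show δ6 P12 = (26:ℝ) from rfl, show wit2 P12 = ((31:ℤ):ℝ) from rfl, Real.dist_eq]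
    norm_num
  · rw [show δ6 P13 = (34:ℝ) from rfl, show wit2 P13 = ((36:ℤ):ℝ) from rfl, Real.dist_eq]
    norm_num
  · rw [show δ6 P14 = (23:ℝ) from rfl, show wit2 P14 = ((28:ℤ):ℝ) from rfl, Real.dist_eq]
    norm_num
  · rw [show δ6 P15 = (32:ℝ) from rfl, show wit2 P15 = ((27:ℤ):ℝ) from rfl, Real.dist_eq]
    norm_num
  · rw [show δ6 P23 = (39:ℝ) from rfl, show wit2 P23 = ((34:ℤ):ℝ) from rfl, Real.dist_eq]
    norm_num
  · rw [show δ6 P24 = (41:ℝ) from rfl, show wit2 P24 = ((41:ℤ):ℝ) from rfl, Real.dist_eq]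
    norm_num
  · rw [show δ6 P25 = (34:ℝ) from rfl, show wit2 P25 = ((39:ℤ):ℝ) from rfl, Real.dist_eq]
    norm_num
  · rw [show δ6 P34 = (46:ℝ) from rfl, show wit2 P34 = ((46:ℤ):ℝ) from rfl, Real.dist_eq]
    norm_num
  · rw [show δ6 P35 = (49:ℝ) from rfl, show wit2 P35 = ((44:ℤ):ℝ) from rfl, Real.dist_eq]
    norm_num
  · rw [show δ6 P45 = (32:ℝ) from rfl, show wit2 P45 = ((37:ℤ):ℝ) from rfl, Real.dist_eq]
    norm_num
lemma lower_false (x : DissimMap 6) (hx : x ∈ TropGrass 6)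
    (hb : ∀ p : PairIdx 6, dist (δ6 p) (x p) < 5) : False := by
  have b01 := hb P01
  rw [show δ6 P01 = (35:ℝ) from rfl, Real.dist_eq, abs_lt] at b01
  obtain ⟨b01l, b01u⟩ := b01
  have b02 := hb P02
  rw [show δ6 P02 = (22:ℝ) from rfl, Real.dist_eq, abs_lt] at b02
  obtain ⟨b02l, b02u⟩ := b02
  have b03 := hb P03
  rw [show δ6 P03 = (32:ℝ) from rfl, Real.dist_eq, abs_lt] at b03
  obtain ⟨b03l, b03u⟩ := b03
  have b04 := hb P04
  rw [show δ6 P04 = (49:ℝ) from rfl, Real.dist_eq, abs_lt] at b04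
  obtain ⟨b04l, b04u⟩ := b04
  have b05 := hb P05
  rw [show δ6 P05 = (42:ℝ) from rfl, Real.dist_eq, abs_lt] at b05
  obtain ⟨b05l, b05u⟩ := b05
  have b12 := hb P12
  rw [show δ6 P12 = (26:ℝ) from rfl, Real.dist_eq, abs_lt] at b12
  obtain ⟨b12l, b12u⟩ := b12
  have b13 := hb P13
  rw [show δ6 P13 = (34:ℝ) from rfl, Real.dist_eq, abs_lt] at b13
  obtain ⟨b13l, b13u⟩ := b13
  have b14 := hb P14
  rw [show δ6 P14 = (23:ℝ) from rfl, Real.dist_eq, abs_lt] at b14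
  obtain ⟨b14l, b14u⟩ := b14
  have b15 := hb P15
  rw [show δ6 P15 = (32:ℝ) from rfl, Real.dist_eq, abs_lt] at b15
  obtain ⟨b15l, b15u⟩ := b15
  have b23 := hb P23
  rw [show δ6 P23 = (39:ℝ) from rfl, Real.dist_eq, abs_lt] at b23
  obtain ⟨b23l, b23u⟩ := b23
  have b24 := hb P24
  rw [show δ6 P24 = (41:ℝ) from rfl, Real.dist_eq, abs_lt] at b24
  obtain ⟨b24l, b24u⟩ := b24
  have b25 := hb P25
  rw [show δ6 P25 = (34:ℝ) from rfl, Real.dist_eq, abs_lt] at b25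
  obtain ⟨b25l, b25u⟩ := b25
  have b34 := hb P34
  rw [show δ6 P34 = (46:ℝ) from rfl, Real.dist_eq, abs_lt] at b34
  obtain ⟨b34l, b34u⟩ := b34
  have b35 := hb P35
  rw [show δ6 P35 = (49:ℝ) from rfl, Real.dist_eq, abs_lt] at b35
  obtain ⟨b35l, b35u⟩ := b35
  have b45 := hb P45
  rw [show δ6 P45 = (32:ℝ) from rfl, Real.dist_eq, abs_lt] at b45
  obtain ⟨b45l, b45u⟩ := b45
  have f0 : x P01 + x P23 ≤ max (x P02 + x P13) (x P03 + x P12) :=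
    hx 0 1 2 3 (by decide) (by decide) (by decide) (by decide) (by decide) (by decide)
  have f1 : x P02 + x P13 ≤ max (x P01 + x P23) (x P03 + x P12) :=
    hx 0 2 1 3 (by decide) (by decide) (by decide) (by decide) (by decide) (by decide)
  have f2 : x P04 + x P13 ≤ max (x P01 + x P34) (x P03 + x P14) :=
    hx 0 4 1 3 (by decide) (by decide) (by decide) (by decide) (by decide) (by decide)
  have f3 : x P04 + x P12 ≤ max (x P01 + x P24) (x P02 + x P14) :=
    hx 0 4 1 2 (by decide) (by decide) (by decide) (by decide) (by decide) (by decide)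
  have f4 : x P15 + x P24 ≤ max (x P12 + x P45) (x P14 + x P25) :=
    hx 1 5 2 4 (by decide) (by decide) (by decide) (by decide) (by decide) (by decide)
  rw [le_max_iff] at f0
  rw [le_max_iff] at f1
  rw [le_max_iff] at f2
  rw [le_max_iff] at f3
  rw [le_max_iff] at f4
  rcases f0 with f0|f0 <;> rcases f1 with f1|f1 <;> rcases f2 with f2|f2 <;> rcases f3 with f3|f3 <;> rcases f4 with f4|f4 <;> linarith

lemma key (x : DissimMap 6) (hx : x ∈ TropGrass 6)
    (hb : ∀ p : PairIdx 6, dist (δ6 p) (x p) ≤ 5) :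
    (x P01 ≤ x P02 + x P12) ∧ (x P04 ≤ x P01 + x P14) ∧ (x P04 ≤ x P02 + x P24) ∧ (x P05 ≤ x P02 + x P25) ∧ (x P24 ≤ x P12 + x P14) ∧ (x P34 ≤ x P13 + x P14) ∧ ((x P01 ≤ 32 ∨ 34 ≤ x P01)) := by
  have b01 := hb P01
  rw [show δ6 P01 = (35:ℝ) from rfl, Real.dist_eq, abs_le] at b01
  obtain ⟨b01l, b01u⟩ := b01
  have b02 := hb P02
  rw [show δ6 P02 = (22:ℝ) from rfl, Real.dist_eq, abs_le] at b02
  obtain ⟨b02l, b02u⟩ := b02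
  have b03 := hb P03
  rw [show δ6 P03 = (32:ℝ) from rfl, Real.dist_eq, abs_le] at b03
  obtain ⟨b03l, b03u⟩ := b03
  have b04 := hb P04
  rw [show δ6 P04 = (49:ℝ) from rfl, Real.dist_eq, abs_le] at b04
  obtain ⟨b04l, b04u⟩ := b04
  have b05 := hb P05
  rw [show δ6 P05 = (42:ℝ) from rfl, Real.dist_eq, abs_le] at b05
  obtain ⟨b05l, b05u⟩ := b05
  have b12 := hb P12
  rw [show δ6 P12 = (26:ℝ) from rfl, Real.dist_eq, abs_le] at b12
  obtain ⟨b12l, b12u⟩ := b12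
  have b13 := hb P13
  rw [show δ6 P13 = (34:ℝ) from rfl, Real.dist_eq, abs_le] at b13
  obtain ⟨b13l, b13u⟩ := b13
  have b14 := hb P14
  rw [show δ6 P14 = (23:ℝ) from rfl, Real.dist_eq, abs_le] at b14
  obtain ⟨b14l, b14u⟩ := b14
  have b15 := hb P15
  rw [show δ6 P15 = (32:ℝ) from rfl, Real.dist_eq, abs_le] at b15
  obtain ⟨b15l, b15u⟩ := b15
  have b23 := hb P23
  rw [show δ6 P23 = (39:ℝ) from rfl, Real.dist_eq, abs_le] at b23
  obtain ⟨b23l, b23u⟩ := b23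
  have b24 := hb P24
  rw [show δ6 P24 = (41:ℝ) from rfl, Real.dist_eq, abs_le] at b24
  obtain ⟨b24l, b24u⟩ := b24
  have b25 := hb P25
  rw [show δ6 P25 = (34:ℝ) from rfl, Real.dist_eq, abs_le] at b25
  obtain ⟨b25l, b25u⟩ := b25
  have b34 := hb P34
  rw [show δ6 P34 = (46:ℝ) from rfl, Real.dist_eq, abs_le] at b34
  obtain ⟨b34l, b34u⟩ := b34
  have b35 := hb P35
  rw [show δ6 P35 = (49:ℝ) from rfl, Real.dist_eq, abs_le] at b35
  obtain ⟨b35l, b35u⟩ := b35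
  have b45 := hb P45
  rw [show δ6 P45 = (32:ℝ) from rfl, Real.dist_eq, abs_le] at b45
  obtain ⟨b45l, b45u⟩ := b45
  refine ⟨?_, ?_, ?_, ?_, ?_, ?_, ?_⟩
  · have g : x P01 + x P23 ≤ max (x P02 + x P13) (x P03 + x P12) :=
      hx 0 1 2 3 (by decide) (by decide) (by decide) (by decide) (by decide) (by decide)
    rw [le_max_iff] at g
    rcases g with g|g <;> linarith
  · have g : x P04 + x P15 ≤ max (x P01 + x P45) (x P05 + x P14) :=
      hx 0 4 1 5 (by decide) (by decide) (by decide) (by decide) (by decide) (by decide)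
    rw [le_max_iff] at g
    rcases g with g|g <;> linarith
  · have g : x P04 + x P23 ≤ max (x P02 + x P34) (x P03 + x P24) :=
      hx 0 4 2 3 (by decide) (by decide) (by decide) (by decide) (by decide) (by decide)
    rw [le_max_iff] at g
    rcases g with g|g <;> linarith
  · have g : x P05 + x P23 ≤ max (x P02 + x P35) (x P03 + x P25) :=
      hx 0 5 2 3 (by decide) (by decide) (by decide) (by decide) (by decide) (by decide)
    rw [le_max_iff] at g
    rcases g with g|g <;> linarith
  · have g : x P15 + x P24 ≤ max (x P12 + x P45) (x P14 + x P25) :=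
      hx 1 5 2 4 (by decide) (by decide) (by decide) (by decide) (by decide) (by decide)
    rw [le_max_iff] at g
    rcases g with g|g <;> linarith
  · have g : x P15 + x P34 ≤ max (x P13 + x P45) (x P14 + x P35) :=
      hx 1 5 3 4 (by decide) (by decide) (by decide) (by decide) (by decide) (by decide)
    rw [le_max_iff] at g
    rcases g with g|g <;> linarith
  have f0 : x P01 + x P23 ≤ max (x P02 + x P13) (x P03 + x P12) :=
    hx 0 1 2 3 (by decide) (by decide) (by decide) (by decide) (by decide) (by decide)
  have f1 : x P02 + x P13 ≤ max (x P01 + x P23) (x P03 + x P12) :=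
    hx 0 2 1 3 (by decide) (by decide) (by decide) (by decide) (by decide) (by decide)
  have f2 : x P04 + x P13 ≤ max (x P01 + x P34) (x P03 + x P14) :=
    hx 0 4 1 3 (by decide) (by decide) (by decide) (by decide) (by decide) (by decide)
  have f3 : x P04 + x P12 ≤ max (x P01 + x P24) (x P02 + x P14) :=
    hx 0 4 1 2 (by decide) (by decide) (by decide) (by decide) (by decide) (by decide)
  have f4 : x P15 + x P24 ≤ max (x P12 + x P45) (x P14 + x P25) :=
    hx 1 5 2 4 (by decide) (by decide) (by decide) (by decide) (by decide) (by decide)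
  rw [le_max_iff] at f0
  rw [le_max_iff] at f1
  rw [le_max_iff] at f2
  rw [le_max_iff] at f3
  rw [le_max_iff] at f4
  rcases f0 with f0|f0
  · rcases f1 with f1|f1
    · rcases f2 with f2|f2
      · rcases f3 with f3|f3
        · rcases f4 with f4|f4
          · left; linarith
          · left; linarith
        · rcases f4 with f4|f4
          · left; linarith
          · left; linarith
      · rcases f3 with f3|f3
        · rcases f4 with f4|f4
          · left; linarith
          · left; linarith
        · rcases f4 with f4|f4
          · left; linarith
          · left; linarith
    · rcases f2 with f2|f2
      · rcases f3 with f3|f3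
        · rcases f4 with f4|f4
          · left; linarith
          · left; linarith
        · rcases f4 with f4|f4
          · left; linarith
          · left; linarith
      · rcases f3 with f3|f3
        · rcases f4 with f4|f4
          · left; linarith
          · left; linarith
        · rcases f4 with f4|f4
          · left; linarith
          · left; linarith
  · rcases f1 with f1|f1
    · rcases f2 with f2|f2
      · rcases f3 with f3|f3
        · rcases f4 with f4|f4
          · right; linarith
          · left; linarith
        · rcases f4 with f4|f4
          · left; linarith
          · left; linarith
      · rcases f3 with f3|f3
        · rcases f4 with f4|f4
          · left; linarith
          · left; linarith
        · rcases f4 with f4|f4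
          · left; linarith
          · left; linarith
    · rcases f2 with f2|f2
      · rcases f3 with f3|f3
        · rcases f4 with f4|f4
          · right; linarith
          · left; linarith
        · rcases f4 with f4|f4
          · left; linarith
          · left; linarith
      · rcases f3 with f3|f3
        · rcases f4 with f4|f4
          · left; linarith
          · left; linarith
        · rcases f4 with f4|f4
          · left; linarith
          · left; linarith

lemma dmE01 (y : DissimMap 6) : dm y 0 1 = y P01 := rfl
lemma dmE10 (y : DissimMap 6) : dm y 1 0 = y P01 := rfl
lemma dmE02 (y : DissimMap 6) : dm y 0 2 = y P02 := rfl
lemma dmE20 (y : DissimMap 6) : dm y 2 0 = y P02 := rfl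
lemma dmE03 (y : DissimMap 6) : dm y 0 3 = y P03 := rfl
lemma dmE30 (y : DissimMap 6) : dm y 3 0 = y P03 := rfl
lemma dmE04 (y : DissimMap 6) : dm y 0 4 = y P04 := rfl
lemma dmE40 (y : DissimMap 6) : dm y 4 0 = y P04 := rfl
lemma dmE05 (y : DissimMap 6) : dm y 0 5 = y P05 := rfl
lemma dmE50 (y : DissimMap 6) : dm y 5 0 = y P05 := rfl
lemma dmE12 (y : DissimMap 6) : dm y 1 2 = y P12 := rfl
lemma dmE21 (y : DissimMap 6) : dm y 2 1 = y P12 := rfl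
lemma dmE13 (y : DissimMap 6) : dm y 1 3 = y P13 := rfl
lemma dmE31 (y : DissimMap 6) : dm y 3 1 = y P13 := rfl
lemma dmE14 (y : DissimMap 6) : dm y 1 4 = y P14 := rfl
lemma dmE41 (y : DissimMap 6) : dm y 4 1 = y P14 := rfl
lemma dmE15 (y : DissimMap 6) : dm y 1 5 = y P15 := rfl
lemma dmE51 (y : DissimMap 6) : dm y 5 1 = y P15 := rfl
lemma dmE23 (y : DissimMap 6) : dm y 2 3 = y P23 := rfl
lemma dmE32 (y : DissimMap 6) : dm y 3 2 = y P23 := rfl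
lemma dmE24 (y : DissimMap 6) : dm y 2 4 = y P24 := rfl
lemma dmE42 (y : DissimMap 6) : dm y 4 2 = y P24 := rfl
lemma dmE25 (y : DissimMap 6) : dm y 2 5 = y P25 := rfl
lemma dmE52 (y : DissimMap 6) : dm y 5 2 = y P25 := rfl
lemma dmE34 (y : DissimMap 6) : dm y 3 4 = y P34 := rfl
lemma dmE43 (y : DissimMap 6) : dm y 4 3 = y P34 := rfl
lemma dmE35 (y : DissimMap 6) : dm y 3 5 = y P35 := rfl
lemma dmE53 (y : DissimMap 6) : dm y 5 3 = y P35 := rfl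
lemma dmE45 (y : DissimMap 6) : dm y 4 5 = y P45 := rfl
lemma dmE54 (y : DissimMap 6) : dm y 5 4 = y P45 := rfl

set_option maxHeartbeats 2000000 in
lemma mem_tree_of_close (x : DissimMap 6) (hx : x ∈ TropGrass 6)
    (hb : ∀ p : PairIdx 6, dist (δ6 p) (x p) ≤ 5) : x ∈ TreeMetrics 6 := by
  obtain ⟨t1, t2, t3, t4, t5, t6, -⟩ := key x hx hb
  have b01 := hb P01
  rw [show δ6 P01 = (35:ℝ) from rfl, Real.dist_eq, abs_le] at b01
  obtain ⟨b01l, b01u⟩ := b01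
  have b02 := hb P02
  rw [show δ6 P02 = (22:ℝ) from rfl, Real.dist_eq, abs_le] at b02
  obtain ⟨b02l, b02u⟩ := b02
  have b03 := hb P03
  rw [show δ6 P03 = (32:ℝ) from rfl, Real.dist_eq, abs_le] at b03
  obtain ⟨b03l, b03u⟩ := b03
  have b04 := hb P04
  rw [show δ6 P04 = (49:ℝ) from rfl, Real.dist_eq, abs_le] at b04
  obtain ⟨b04l, b04u⟩ := b04
  have b05 := hb P05
  rw [show δ6 P05 = (42:ℝ) from rfl, Real.dist_eq, abs_le] at b05
  obtain ⟨b05l, b05u⟩ := b05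
  have b12 := hb P12
  rw [show δ6 P12 = (26:ℝ) from rfl, Real.dist_eq, abs_le] at b12
  obtain ⟨b12l, b12u⟩ := b12
  have b13 := hb P13
  rw [show δ6 P13 = (34:ℝ) from rfl, Real.dist_eq, abs_le] at b13
  obtain ⟨b13l, b13u⟩ := b13
  have b14 := hb P14
  rw [show δ6 P14 = (23:ℝ) from rfl, Real.dist_eq, abs_le] at b14
  obtain ⟨b14l, b14u⟩ := b14
  have b15 := hb P15
  rw [show δ6 P15 = (32:ℝ) from rfl, Real.dist_eq, abs_le] at b15
  obtain ⟨b15l, b15u⟩ := b15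
  have b23 := hb P23
  rw [show δ6 P23 = (39:ℝ) from rfl, Real.dist_eq, abs_le] at b23
  obtain ⟨b23l, b23u⟩ := b23
  have b24 := hb P24
  rw [show δ6 P24 = (41:ℝ) from rfl, Real.dist_eq, abs_le] at b24
  obtain ⟨b24l, b24u⟩ := b24
  have b25 := hb P25
  rw [show δ6 P25 = (34:ℝ) from rfl, Real.dist_eq, abs_le] at b25
  obtain ⟨b25l, b25u⟩ := b25
  have b34 := hb P34
  rw [show δ6 P34 = (46:ℝ) from rfl, Real.dist_eq, abs_le] at b34
  obtain ⟨b34l, b34u⟩ := b34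
  have b35 := hb P35
  rw [show δ6 P35 = (49:ℝ) from rfl, Real.dist_eq, abs_le] at b35
  obtain ⟨b35l, b35u⟩ := b35
  have b45 := hb P45
  rw [show δ6 P45 = (32:ℝ) from rfl, Real.dist_eq, abs_le] at b45
  obtain ⟨b45l, b45u⟩ := b45
  have htri : ∀ i k l : Fin 6, dm x k l ≤ dm x i k + dm x i l := by
    intro i k l
    rcases fin6_cases i with rfl|rfl|rfl|rfl|rfl|rfl <;>
      rcases fin6_cases k with rfl|rfl|rfl|rfl|rfl|rfl <;>
        rcases fin6_cases l with rfl|rfl|rfl|rfl|rfl|rfl <;>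
          simp only [dmE01, dmE10, dmE02, dmE20, dmE03, dmE30, dmE04, dmE40, dmE05, dmE50, dmE12, dmE21, dmE13, dmE31, dmE14, dmE41, dmE15, dmE51, dmE23, dmE32, dmE24, dmE42, dmE25, dmE52, dmE34, dmE43, dmE35, dmE53, dmE45, dmE54, dm_self] <;> linarith
  refine ⟨?_, fourpt_all x (fun i j k l hij hik hil hjk hjl hkl => hx i j k l hij hik hil hjk hjl hkl) htri⟩
  intro i j hij
  rcases fin6_cases i with rfl|rfl|rfl|rfl|rfl|rfl <;>
    rcases fin6_cases j with rfl|rfl|rfl|rfl|rfl|rfl <;>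
      first
        | exact absurd rfl hij
        | (simp only [dmE01, dmE10, dmE02, dmE20, dmE03, dmE30, dmE04, dmE40, dmE05, dmE50, dmE12, dmE21, dmE13, dmE31, dmE14, dmE41, dmE15, dmE51, dmE23, dmE32, dmE24, dmE42, dmE25, dmE52, dmE34, dmE43, dmE35, dmE53, dmE45, dmE54, dm_self]; linarith)

lemma grass_lower : ∀ y ∈ TropGrass 6, 5 ≤ dist δ6 y := by
  intro y hy
  by_contra h
  push_neg at h
  exact lower_false y hy (fun p => lt_of_le_of_lt (dist_le_pi_dist δ6 y p) h)

lemma infG : Metric.infDist δ6 (TropGrass 6) = 5 := by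
  refine le_antisymm (le_trans (Metric.infDist_le_dist_of_mem (tree_sub wit1_mem)) dist_wit1) ?_
  by_contra h
  push_neg at h
  obtain ⟨y, hy, hd⟩ := (Metric.infDist_lt_iff ⟨wit1, tree_sub wit1_mem⟩).mp h
  exact absurd hd (not_lt.mpr (grass_lower y hy))

lemma infT : Metric.infDist δ6 (TreeMetrics 6) = 5 := by
  refine le_antisymm (le_trans (Metric.infDist_le_dist_of_mem wit1_mem) dist_wit1) ?_
  by_contra h
  push_neg at h
  obtain ⟨y, hy, hd⟩ := (Metric.infDist_lt_iff ⟨wit1, wit1_mem⟩).mp h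
  exact absurd hd (not_lt.mpr (grass_lower y (tree_sub hy)))

lemma coord_le (x : DissimMap 6) (hd : dist δ6 x = 5) (p : PairIdx 6) :
    dist (δ6 p) (x p) ≤ 5 := le_trans (dist_le_pi_dist δ6 x p) (le_of_eq hd)

lemma closest_eq : closestPts δ6 (TreeMetrics 6) = closestPts δ6 (TropGrass 6) := by
  ext y
  simp only [closestPts, Set.mem_setOf_eq, infT, infG]
  constructor
  · rintro ⟨hyT, hd⟩
    exact ⟨tree_sub hyT, hd⟩
  · rintro ⟨hyG, hd⟩
    exact ⟨mem_tree_of_close y hyG (coord_le y hd), hd⟩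

lemma wit1_closest : wit1 ∈ closestPts δ6 (TreeMetrics 6) := by
  refine ⟨wit1_mem, ?_⟩
  rw [infT]
  exact le_antisymm dist_wit1 (infT ▸ Metric.infDist_le_dist_of_mem wit1_mem)

lemma wit2_closest : wit2 ∈ closestPts δ6 (TreeMetrics 6) := by
  refine ⟨wit2_mem, ?_⟩
  rw [infT]
  exact le_antisymm dist_wit2 (infT ▸ Metric.infDist_le_dist_of_mem wit2_mem)

lemma not_conn : ¬ IsPreconnected (closestPts δ6 (TreeMetrics 6)) := by
  intro h
  have hU : IsOpen {y : DissimMap 6 | y P01 < 33} :=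
    isOpen_lt (continuous_apply P01) continuous_const
  have hV : IsOpen {y : DissimMap 6 | (33:ℝ) < y P01} :=
    isOpen_lt continuous_const (continuous_apply P01)
  have hsub : closestPts δ6 (TreeMetrics 6) ⊆
      {y : DissimMap 6 | y P01 < 33} ∪ {y : DissimMap 6 | (33:ℝ) < y P01} := by
    rintro y ⟨hyT, hd⟩
    rw [infT] at hd
    obtain ⟨-,-,-,-,-,-,hsep⟩ := key y (tree_sub hyT) (coord_le y hd)
    rcases hsep with hs|hs
    · left; show y P01 < 33; linarith
    · right; show (33:ℝ) < y P01; linarith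
  have h1 : (closestPts δ6 (TreeMetrics 6) ∩ {y : DissimMap 6 | y P01 < 33}).Nonempty :=
    ⟨wit1, wit1_closest, by show wit1 P01 < 33; rw [show wit1 P01 = ((32:ℤ):ℝ) from rfl]; norm_num⟩
  have h2 : (closestPts δ6 (TreeMetrics 6) ∩ {y : DissimMap 6 | (33:ℝ) < y P01}).Nonempty :=
    ⟨wit2, wit2_closest, by show (33:ℝ) < wit2 P01; rw [show wit2 P01 = ((34:ℤ):ℝ) from rfl]; norm_num⟩
  obtain ⟨z, -, hz1, hz2⟩ := h _ _ hU hV hsub h1 h2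
  have hz1' : z P01 < 33 := hz1
  have hz2' : (33:ℝ) < z P01 := hz2
  linarith

end Aux

/-- for the explicit dissimilarity map
`δ = (35,22,32,49,42,26,34,23,32,39,41,34,46,49,32)` on six elements,
`d(δ, T₆) = d(δ, G₂,₆) = 5`, the sets of `l∞`-closest points in `T₆` and in `G₂,₆`
coincide, and this set is not topologically connected. -/
theorem closest_tree_metrics_disconnected :
    Metric.infDist
      (ofMat !![0,35,22,32,49,42; 35,0,26,34,23,32; 22,26,0,39,41,34;
                32,34,39,0,46,49; 49,23,41,46,0,32; 42,32,34,49,32,0])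
      (TreeMetrics 6) = 5 ∧
    Metric.infDist
      (ofMat !![0,35,22,32,49,42; 35,0,26,34,23,32; 22,26,0,39,41,34;
                32,34,39,0,46,49; 49,23,41,46,0,32; 42,32,34,49,32,0])
      (TropGrass 6) = 5 ∧
    closestPts
      (ofMat !![0,35,22,32,49,42; 35,0,26,34,23,32; 22,26,0,39,41,34;
                32,34,39,0,46,49; 49,23,41,46,0,32; 42,32,34,49,32,0])
      (TreeMetrics 6) =
    closestPts
      (ofMat !![0,35,22,32,49,42; 35,0,26,34,23,32; 22,26,0,39,41,34;
                32,34,39,0,46,49; 49,23,41,46,0,32; 42,32,34,49,32,0])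
      (TropGrass 6) ∧
    ¬ IsPreconnected (closestPts
      (ofMat !![0,35,22,32,49,42; 35,0,26,34,23,32; 22,26,0,39,41,34;
                32,34,39,0,46,49; 49,23,41,46,0,32; 42,32,34,49,32,0])
      (TreeMetrics 6)) := by
  exact ⟨infT, infG, closest_eq, not_conn⟩
end

section
/- Let δ ∈ ℝ^(n choose 2) be a dissimilarity map and suppose δ_U is a subdominant ultrametric for δ, i.e., δ_U ∈ U_n, δ_U ≤ δ coordinatewise, and every ultrametric v with v ≤ δ coordinatewise satisfies v ≤ δ_U coordinatewise. Then every l∞-closest ultrametric u ∈ C(δ, U_n) satisfies u_p ≤ (δ_U)_p + d(δ, U_n) for every pair p; in particular every element of C(δ, U_n) is coordinatewise bounded above by the canonical closest ultrametric δ_U + d(δ, U_n)·𝟙. -/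
/-- if `δ_U` is a subdominant ultrametric for `δ` (the coordinatewise
maximum ultrametric coordinatewise below `δ`), then every `l∞`-closest ultrametric to `δ`
is coordinatewise bounded above by the canonical closest ultrametric
`δ_U + d(δ, U_n)·𝟙`. -/
theorem closest_le_canonical (n : ℕ) (δ δU : DissimMap n)
    (h1 : δU ∈ Ultrametrics n) (h2 : ∀ p, δU p ≤ δ p)
    (h3 : ∀ v ∈ Ultrametrics n, (∀ p, v p ≤ δ p) → ∀ p, v p ≤ δU p) :
    ∀ u ∈ closestPts δ (Ultrametrics n), ∀ p,
      u p ≤ δU p + Metric.infDist δ (Ultrametrics n) := by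
  intro u hu p
  obtain ⟨huU, hdist⟩ := hu
  set r := Metric.infDist δ (Ultrametrics n) with hr
  set v : DissimMap n := fun q => u q - r with hv
  have hdm : ∀ i j : Fin n, i ≠ j → dm v i j = dm u i j - r := by
    intro i j hij
    unfold dm
    rcases lt_trichotomy i j with h | h | h
    · simp [h, hv]
    · exact absurd h hij
    · simp [h, not_lt.mpr h.le, hij, hv]
  have hvU : v ∈ Ultrametrics n := by
    intro i j k hij hik hjk
    rw [hdm i j hij, hdm i k hik, hdm j k hjk]
    have := huU i j k hij hik hjk
    rcases le_total (dm u i k) (dm u j k) with h | h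
    · calc dm u i j - r ≤ max (dm u i k) (dm u j k) - r := by linarith
        _ = dm u j k - r := by rw [max_eq_right h]
        _ ≤ _ := le_max_right _ _
    · calc dm u i j - r ≤ max (dm u i k) (dm u j k) - r := by linarith
        _ = dm u i k - r := by rw [max_eq_left h]
        _ ≤ _ := le_max_left _ _
  have hcoord : ∀ q, |δ q - u q| ≤ r := by
    intro q
    have := dist_le_pi_dist δ u q
    rw [hdist] at this
    rwa [Real.dist_eq] at this
  have hvle : ∀ q, v q ≤ δ q := by
    intro q
    have := hcoord q
    have := abs_le.mp this
    simp only [hv]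
    linarith [this.1]
  have := h3 v hvU hvle p
  simp only [hv] at this
  linarith
end

section
/- Let δ = (1,1,3) ∈ ℝ^3 in coordinates (x_12, x_13, x_23). Then d(δ, U_3) = 1; the points (2,2,2), (2,1,2), and (1,2,2) all belong to C(δ, U_3); and every u ∈ C(δ, U_3) satisfies exactly one of: u_12 = u_13 = u_23, or u_13 < u_12 = u_23, or u_12 < u_13 = u_23. In particular no l∞-closest ultrametric to δ satisfies u_23 < u_12 = u_13. -/
private def q01 : PairIdx 3 := ⟨(0,1), by decide⟩
private def q02 : PairIdx 3 := ⟨(0,2), by decide⟩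
private def q12 : PairIdx 3 := ⟨(1,2), by decide⟩

private lemma pair_cases_s17 (p : PairIdx 3) : p = q01 ∨ p = q02 ∨ p = q12 := by
  revert p; decide

private lemma dm01 (u : DissimMap 3) : dm u 0 1 = u q01 := by simp [dm, q01]
private lemma dm02 (u : DissimMap 3) : dm u 0 2 = u q02 := by simp [dm, q02]
private lemma dm12 (u : DissimMap 3) : dm u 1 2 = u q12 := by simp [dm, q12]
private lemma dm10 (u : DissimMap 3) : dm u 1 0 = u q01 := by simp [dm, q01]
private lemma dm20 (u : DissimMap 3) : dm u 2 0 = u q02 := by simp [dm, q02]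

private noncomputable def δ : DissimMap 3 := ofMat !![0,1,1; 1,0,3; 1,3,0]

private lemma δ01 : δ q01 = 1 := by simp [δ, ofMat, q01]
private lemma δ02 : δ q02 = 1 := by simp [δ, ofMat, q02]
private lemma δ12 : δ q12 = 3 := by simp [δ, ofMat, q12]

private lemma lem_low : ∀ u ∈ Ultrametrics 3, (1:ℝ) ≤ dist δ u := by
  intro u hu
  have h1 := dist_le_pi_dist δ u q01
  have h2 := dist_le_pi_dist δ u q02
  have h3 := dist_le_pi_dist δ u q12
  rw [Real.dist_eq, δ01] at h1
  rw [Real.dist_eq, δ02] at h2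
  rw [Real.dist_eq, δ12] at h3
  have h1' := abs_le.mp h1
  have h2' := abs_le.mp h2
  have h3' := abs_le.mp h3
  have hum := hu 1 2 0 (by decide) (by decide) (by decide)
  rw [dm12, dm10, dm20] at hum
  rcases le_total (u q01) (u q02) with h | h
  · rw [max_eq_right h] at hum; linarith [h1'.1, h2'.1, h3'.1, h1'.2, h2'.2, h3'.2]
  · rw [max_eq_left h] at hum; linarith [h1'.1, h2'.1, h3'.1, h1'.2, h2'.2, h3'.2]

private lemma mem_um (A : Matrix (Fin 3) (Fin 3) ℝ)
    (h : ∀ i j k : Fin 3, i ≠ j → i ≠ k → j ≠ k →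
      dm (ofMat A) i j ≤ max (dm (ofMat A) i k) (dm (ofMat A) j k)) :
    ofMat A ∈ Ultrametrics 3 := h

private lemma um1 : ofMat !![0,2,2; 2,0,2; 2,2,0] ∈ Ultrametrics 3 := by
  intro i j k _ _ _
  fin_cases i <;> fin_cases j <;> fin_cases k <;> simp [dm, ofMat]

private lemma um2 : ofMat !![0,2,1; 2,0,2; 1,2,0] ∈ Ultrametrics 3 := by
  intro i j k _ _ _
  fin_cases i <;> fin_cases j <;> fin_cases k <;> simp [dm, ofMat]

private lemma um3 : ofMat !![0,1,2; 1,0,2; 2,2,0] ∈ Ultrametrics 3 := by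
  intro i j k _ _ _
  fin_cases i <;> fin_cases j <;> fin_cases k <;> simp [dm, ofMat]

private lemma dist1 (A : Matrix (Fin 3) (Fin 3) ℝ)
    (h01 : |(1:ℝ) - A 0 1| ≤ 1) (h02 : |(1:ℝ) - A 0 2| ≤ 1) (h12 : |(3:ℝ) - A 1 2| ≤ 1)
    (hmem : ofMat A ∈ Ultrametrics 3) : dist δ (ofMat A) = 1 := by
  refine le_antisymm ?_ (lem_low _ hmem)
  refine (dist_pi_le_iff one_pos.le).mpr fun p => ?_
  rcases pair_cases_s17 p with rfl | rfl | rfl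
  · rw [Real.dist_eq, δ01]; exact h01
  · rw [Real.dist_eq, δ02]; exact h02
  · rw [Real.dist_eq, δ12]; exact h12

private lemma inf1 : Metric.infDist δ (Ultrametrics 3) = 1 := by
  have hd : dist δ (ofMat !![0,2,2; 2,0,2; 2,2,0]) = 1 := by
    apply dist1 <;> first
      | exact um1
      | (show |(_:ℝ) - _| ≤ 1; norm_num [Matrix.cons_val_zero, Matrix.cons_val_one, Matrix.cons_val_two])
  refine le_antisymm (hd ▸ Metric.infDist_le_dist_of_mem um1) ?_
  by_contra hlt
  push_neg at hlt
  obtain ⟨y, hy, hylt⟩ := (Metric.infDist_lt_iff ⟨_, um1⟩).mp hlt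
  exact absurd hylt (not_lt.mpr (lem_low y hy))

/-- for `δ = (1,1,3)` (coordinates `(x₁₂,x₁₃,x₂₃)`), `d(δ, U₃) = 1`; the
ultrametrics `(2,2,2)`, `(2,1,2)` and `(1,2,2)` are `l∞`-closest to `δ`; and every
`l∞`-closest ultrametric `u` satisfies exactly one of `u₁₂ = u₁₃ = u₂₃`,
`u₁₃ < u₁₂ = u₂₃`, or `u₁₂ < u₁₃ = u₂₃` — in particular never `u₂₃ < u₁₂ = u₁₃`. -/
theorem three_leaf_districts :
    Metric.infDist (ofMat !![0,1,1; 1,0,3; 1,3,0]) (Ultrametrics 3) = 1 ∧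
    ofMat !![0,2,2; 2,0,2; 2,2,0] ∈
      closestPts (ofMat !![0,1,1; 1,0,3; 1,3,0]) (Ultrametrics 3) ∧
    ofMat !![0,2,1; 2,0,2; 1,2,0] ∈
      closestPts (ofMat !![0,1,1; 1,0,3; 1,3,0]) (Ultrametrics 3) ∧
    ofMat !![0,1,2; 1,0,2; 2,2,0] ∈
      closestPts (ofMat !![0,1,1; 1,0,3; 1,3,0]) (Ultrametrics 3) ∧
    ∀ u ∈ closestPts (ofMat !![0,1,1; 1,0,3; 1,3,0]) (Ultrametrics 3),
      ((dm u 0 1 = dm u 0 2 ∧ dm u 0 2 = dm u 1 2) ∨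
        (dm u 0 2 < dm u 0 1 ∧ dm u 0 1 = dm u 1 2) ∨
        (dm u 0 1 < dm u 0 2 ∧ dm u 0 2 = dm u 1 2)) ∧
      ¬ (dm u 1 2 < dm u 0 1 ∧ dm u 0 1 = dm u 0 2) := by
  have hδ : ofMat !![0,1,1; 1,0,3; 1,3,0] = δ := rfl
  rw [hδ]
  have hc1 : dist δ (ofMat !![0,2,2; 2,0,2; 2,2,0]) = 1 := by
    apply dist1 _ _ _ _ um1 <;> norm_num [Matrix.cons_val_two]
  have hc2 : dist δ (ofMat !![0,2,1; 2,0,2; 1,2,0]) = 1 := by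
    apply dist1 _ _ _ _ um2 <;> norm_num [Matrix.cons_val_two]
  have hc3 : dist δ (ofMat !![0,1,2; 1,0,2; 2,2,0]) = 1 := by
    apply dist1 _ _ _ _ um3 <;> norm_num [Matrix.cons_val_two]
  refine ⟨inf1, ⟨um1, by rw [hc1, inf1]⟩, ⟨um2, by rw [hc2, inf1]⟩,
    ⟨um3, by rw [hc3, inf1]⟩, ?_⟩
  rintro u ⟨hu, hdist⟩
  rw [inf1] at hdist
  have h1 := dist_le_pi_dist δ u q01
  have h2 := dist_le_pi_dist δ u q02
  have h3 := dist_le_pi_dist δ u q12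
  rw [hdist, Real.dist_eq, δ01] at h1
  rw [hdist, Real.dist_eq, δ02] at h2
  rw [hdist, Real.dist_eq, δ12] at h3
  have h1' := abs_le.mp h1
  have h2' := abs_le.mp h2
  have h3' := abs_le.mp h3
  have hum := hu 1 2 0 (by decide) (by decide) (by decide)
  rw [dm12, dm10, dm20] at hum
  have ha2 : u q01 ≤ 2 := by linarith [h1'.1]
  have hb2 : u q02 ≤ 2 := by linarith [h2'.1]
  have hc2' : 2 ≤ u q12 := by linarith [h3'.2]
  have hcle : u q12 ≤ 2 := hum.trans (max_le ha2 hb2)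
  have hceq : u q12 = 2 := le_antisymm hcle hc2'
  rw [dm01, dm02, dm12, hceq]
  constructor
  · rcases lt_trichotomy (u q01) (u q02) with h | h | h
    · right; right
      refine ⟨h, le_antisymm hb2 ?_⟩
      rw [max_eq_right h.le] at hum; linarith
    · left
      rw [h, max_self] at hum
      have hb : u q02 = 2 := le_antisymm hb2 (by linarith)
      exact ⟨h.trans rfl, hb⟩
    · right; left
      refine ⟨h, le_antisymm ha2 ?_⟩
      rw [max_eq_left h.le] at hum; linarith
  · rintro ⟨hlt, _⟩; linarith
end
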